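/- arXiv:1307.1437 — 8 statements merged into one kernel-verified Lean document; each statement's English description precedes it below -/
import Mathlib

section
/- Let C and Ĉ be nonempty cones in ℝ^m (sets closed under multiplication by nonnegative scalars). Let τ > 0 and η ≥ 0 satisfy (1+η)τ < π/2. Suppose δ(C,Ĉ) ≤ (1/2)(sin((1+η)τ) − sin τ), and let ξ satisfy arcsin(sin τ + δ(C,Ĉ)) ≤ ξ ≤ arcsin(sin((1+η)τ) − δ(C,Ĉ)). Then for every nonzero y ∈ ℝ^m: (i) if ∠(y,C) ≤ τ then ∠(y,Ĉ) ≤ ξ, and (ii) if ∠(y,C) > (1+η)τ then ∠(y,Ĉ) > ξ. -/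
open scoped RealInnerProductSpace

/-- A cone: a set closed under multiplication by nonnegative scalars. -/
def IsCone {m : ℕ} (C : Set (EuclideanSpace ℝ (Fin m))) : Prop :=
  ∀ (t : ℝ), 0 ≤ t → ∀ x ∈ C, t • x ∈ C

/-- The discrepancy δ(C,Ĉ) between two cones: the Hausdorff-type maximum of the two
one-sided deviations measured over unit-norm elements (suprema over empty sets are 0). -/
noncomputable def coneDisc {m : ℕ} (C Chat : Set (EuclideanSpace ℝ (Fin m))) : ℝ :=
  max (⨆ y : {y : EuclideanSpace ℝ (Fin m) // y ∈ C ∧ ‖y‖ = 1},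
        Metric.infDist (y : EuclideanSpace ℝ (Fin m)) Chat)
      (⨆ y : {y : EuclideanSpace ℝ (Fin m) // y ∈ Chat ∧ ‖y‖ = 1},
        Metric.infDist (y : EuclideanSpace ℝ (Fin m)) C)

/-- The angle from a (nonzero) point to a cone: arcsin(dist(y,C)/‖y‖). -/
noncomputable def coneAngle {m : ℕ} (y : EuclideanSpace ℝ (Fin m))
    (C : Set (EuclideanSpace ℝ (Fin m))) : ℝ :=
  Real.arcsin (Metric.infDist y C / ‖y‖)

lemma cone_zero_mem {m : ℕ} {C : Set (EuclideanSpace ℝ (Fin m))}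
    (hC : IsCone C) (hne : C.Nonempty) : (0 : EuclideanSpace ℝ (Fin m)) ∈ C := by
  obtain ⟨x, hx⟩ := hne
  have := hC 0 le_rfl x hx
  simpa using this

lemma infDist_le_norm {m : ℕ} {C : Set (EuclideanSpace ℝ (Fin m))}
    (hC : IsCone C) (hne : C.Nonempty) (y : EuclideanSpace ℝ (Fin m)) :
    Metric.infDist y C ≤ ‖y‖ := by
  have h0 := cone_zero_mem hC hne
  have := Metric.infDist_le_dist_of_mem (x := y) h0
  simpa using this

lemma infDist_smul_le {m : ℕ} {C : Set (EuclideanSpace ℝ (Fin m))}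
    (hC : IsCone C) (hne : C.Nonempty) {t : ℝ} (ht : 0 ≤ t)
    (u : EuclideanSpace ℝ (Fin m)) :
    Metric.infDist (t • u) C ≤ t * Metric.infDist u C := by
  rcases eq_or_lt_of_le ht with rfl | ht'
  · simp only [zero_smul, zero_mul]
    have := Metric.infDist_le_dist_of_mem (x := (0:ℝ) • u) (cone_zero_mem hC hne)
    simpa using this
  · refine le_of_forall_pos_le_add fun ε hε => ?_
    have hlt : Metric.infDist u C < Metric.infDist u C + ε / t := by
      linarith [div_pos hε ht']
    obtain ⟨w, hw, hdw⟩ := (Metric.infDist_lt_iff hne).1 hlt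
    have htw : t • w ∈ C := hC t ht w hw
    have h1 : Metric.infDist (t • u) C ≤ dist (t • u) (t • w) :=
      Metric.infDist_le_dist_of_mem htw
    have h2 : dist (t • u) (t • w) = t * dist u w := by
      rw [dist_smul₀, Real.norm_eq_abs, abs_of_nonneg ht]
    calc Metric.infDist (t • u) C ≤ t * dist u w := by rw [← h2]; exact h1
      _ ≤ t * (Metric.infDist u C + ε / t) := by
          exact mul_le_mul_of_nonneg_left hdw.le ht
      _ = t * Metric.infDist u C + ε := by
          rw [mul_add]; congr 1; field_simp

lemma coneDisc_nonneg {m : ℕ} (C Chat : Set (EuclideanSpace ℝ (Fin m))) :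
    0 ≤ coneDisc C Chat :=
  le_trans (Real.iSup_nonneg fun y => Metric.infDist_nonneg) (le_max_left _ _)

lemma unit_infDist_le_disc_left {m : ℕ} {C Chat : Set (EuclideanSpace ℝ (Fin m))}
    (hChat : IsCone Chat) (hChatne : Chat.Nonempty)
    {u : EuclideanSpace ℝ (Fin m)} (hu : u ∈ C) (hnu : ‖u‖ = 1) :
    Metric.infDist u Chat ≤ coneDisc C Chat := by
  have hb : BddAbove (Set.range fun y : {y : EuclideanSpace ℝ (Fin m) // y ∈ C ∧ ‖y‖ = 1} =>
      Metric.infDist (y : EuclideanSpace ℝ (Fin m)) Chat) := by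
    refine ⟨1, ?_⟩
    rintro _ ⟨⟨y, hy, hny⟩, rfl⟩
    have := infDist_le_norm hChat hChatne y
    simpa [hny] using this
  exact le_trans (le_ciSup hb ⟨u, hu, hnu⟩) (le_max_left _ _)

lemma unit_infDist_le_disc_right {m : ℕ} {C Chat : Set (EuclideanSpace ℝ (Fin m))}
    (hC : IsCone C) (hCne : C.Nonempty)
    {u : EuclideanSpace ℝ (Fin m)} (hu : u ∈ Chat) (hnu : ‖u‖ = 1) :
    Metric.infDist u C ≤ coneDisc C Chat := by
  have hb : BddAbove (Set.range fun y : {y : EuclideanSpace ℝ (Fin m) // y ∈ Chat ∧ ‖y‖ = 1} =>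
      Metric.infDist (y : EuclideanSpace ℝ (Fin m)) C) := by
    refine ⟨1, ?_⟩
    rintro _ ⟨⟨y, hy, hny⟩, rfl⟩
    have := infDist_le_norm hC hCne y
    simpa [hny] using this
  exact le_trans (le_ciSup hb ⟨u, hu, hnu⟩) (le_max_right _ _)

/-- Key transfer lemma: `dist(y,Ĉ) ≤ dist(y,C) + δ·‖y‖` assuming unit vectors of `C`
are within `δ` of `Ĉ`. -/
lemma infDist_transfer {m : ℕ} {C Chat : Set (EuclideanSpace ℝ (Fin m))}
    (hC : IsCone C) (hCne : C.Nonempty) (hChat : IsCone Chat) (hChatne : Chat.Nonempty)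
    {δ : ℝ} (hδ0 : 0 ≤ δ)
    (hδ : ∀ u ∈ C, ‖u‖ = 1 → Metric.infDist u Chat ≤ δ)
    (y : EuclideanSpace ℝ (Fin m)) :
    Metric.infDist y Chat ≤ Metric.infDist y C + δ * ‖y‖ := by
  refine le_of_forall_pos_le_add fun ε hε => ?_
  have hlt : Metric.infDist y C < Metric.infDist y C + ε := by linarith
  obtain ⟨z, hz, hdz⟩ := (Metric.infDist_lt_iff hCne).1 hlt
  rcases eq_or_ne z 0 with rfl | hz0
  · -- dist y 0 = ‖y‖, so infDist y C + ε > ‖y‖ ≥ infDist y Chat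
    have h1 := infDist_le_norm hChat hChatne y
    have h2 : dist y (0 : EuclideanSpace ℝ (Fin m)) = ‖y‖ := by simp
    rw [h2] at hdz
    nlinarith [mul_nonneg hδ0 (norm_nonneg y)]
  · set u : EuclideanSpace ℝ (Fin m) := ‖z‖⁻¹ • z with hu_def
    have hnz : (0:ℝ) < ‖z‖ := norm_pos_iff.2 hz0
    have hu : u ∈ C := hC _ (inv_nonneg.2 hnz.le) z hz
    have hnu : ‖u‖ = 1 := by
      rw [hu_def, norm_smul, Real.norm_eq_abs, abs_of_nonneg (inv_nonneg.2 hnz.le)]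
      field_simp
    set a : ℝ := ⟪y, u⟫ with ha_def
    set t : ℝ := max 0 a with ht_def
    have ht0 : 0 ≤ t := le_max_left _ _
    have hz' : t • u ∈ C := hC t ht0 u hu
    have hzu : z = ‖z‖ • u := by
      rw [hu_def, smul_smul]
      field_simp
      rw [one_smul]
    -- ‖y - t•u‖ ≤ ‖y - z‖
    have hsq : ∀ c : ℝ, ‖y - c • u‖ ^ 2 = ‖y‖ ^ 2 - 2 * c * a + c ^ 2 := by
      intro c
      rw [norm_sub_sq_real, real_inner_smul_right, norm_smul, Real.norm_eq_abs, hnu,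
        ← ha_def, mul_one, sq_abs]
      ring
    have hkey : ‖y - t • u‖ ≤ ‖y - z‖ := by
      have h1 := hsq t
      have h2 := hsq ‖z‖
      rw [← hzu] at h2
      have hq : ‖y - t • u‖ ^ 2 ≤ ‖y - z‖ ^ 2 := by
        rw [h1, h2]
        rcases le_or_gt a 0 with hca | hca
        · have : t = 0 := max_eq_left hca
          rw [this]
          nlinarith [mul_nonneg hnz.le (neg_nonneg.2 hca), sq_nonneg ‖z‖]
        · have : t = a := max_eq_right hca.le
          rw [this]
          nlinarith [sq_nonneg (‖z‖ - a)]
      nlinarith [norm_nonneg (y - t • u), norm_nonneg (y - z)]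
    -- ‖t • u‖ = t ≤ ‖y‖
    have hty : t ≤ ‖y‖ := by
      have hca : a ≤ ‖y‖ := by
        have := real_inner_le_norm y u
        rwa [hnu, mul_one] at this
      exact max_le (norm_nonneg y) hca
    -- chain
    have h1 : Metric.infDist y Chat ≤ Metric.infDist (t • u) Chat + dist y (t • u) :=
      Metric.infDist_le_infDist_add_dist
    have h2 : Metric.infDist (t • u) Chat ≤ t * Metric.infDist u Chat :=
      infDist_smul_le hChat hChatne ht0 u
    have h3 : Metric.infDist u Chat ≤ δ := hδ u hu hnu
    have h4 : dist y (t • u) = ‖y - t • u‖ := by rw [dist_eq_norm]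
    have h5 : dist y z = ‖y - z‖ := by rw [dist_eq_norm]
    have h6 : t * Metric.infDist u Chat ≤ δ * ‖y‖ := by
      calc t * Metric.infDist u Chat ≤ t * δ :=
            mul_le_mul_of_nonneg_left h3 ht0
        _ ≤ ‖y‖ * δ := mul_le_mul_of_nonneg_right hty hδ0
        _ = δ * ‖y‖ := mul_comm _ _
    calc Metric.infDist y Chat ≤ Metric.infDist (t • u) Chat + dist y (t • u) := h1
      _ ≤ δ * ‖y‖ + ‖y - z‖ := by
          rw [h4]; exact add_le_add (le_trans h2 h6) hkey
      _ ≤ δ * ‖y‖ + (Metric.infDist y C + ε) := by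
          rw [← h5]; linarith
      _ = Metric.infDist y C + δ * ‖y‖ + ε := by ring

theorem stmt0 {m : ℕ} (C Chat : Set (EuclideanSpace ℝ (Fin m)))
    (hCne : C.Nonempty) (hChatne : Chat.Nonempty) (hC : IsCone C) (hChat : IsCone Chat)
    (τ η ξ : ℝ) (hτ : 0 < τ) (hη : 0 ≤ η) (hmax : (1 + η) * τ < Real.pi / 2)
    (hδ : coneDisc C Chat ≤ (Real.sin ((1 + η) * τ) - Real.sin τ) / 2)
    (hξl : Real.arcsin (Real.sin τ + coneDisc C Chat) ≤ ξ)
    (hξu : ξ ≤ Real.arcsin (Real.sin ((1 + η) * τ) - coneDisc C Chat)) :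
    ∀ y : EuclideanSpace ℝ (Fin m), y ≠ 0 →
      (coneAngle y C ≤ τ → coneAngle y Chat ≤ ξ) ∧
      ((1 + η) * τ < coneAngle y C → ξ < coneAngle y Chat) := by
  set δ := coneDisc C Chat with hδ_def
  have hδ0 : 0 ≤ δ := coneDisc_nonneg C Chat
  have hτle : τ ≤ (1 + η) * τ := by nlinarith
  have hτlt : τ < Real.pi / 2 := lt_of_le_of_lt hτle hmax
  have hsinτ : 0 < Real.sin τ := Real.sin_pos_of_pos_of_lt_pi hτ (by linarith [Real.pi_gt_three])
  have hsin1 : Real.sin ((1 + η) * τ) ≤ 1 := Real.sin_le_one _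
  have hsτδ0 : 0 ≤ Real.sin τ + δ := by linarith
  have hsτδ1 : Real.sin τ + δ ≤ 1 := by linarith
  have hb0 : 0 ≤ Real.sin ((1 + η) * τ) - δ := by linarith
  have hb1 : Real.sin ((1 + η) * τ) - δ ≤ 1 := by linarith
  intro y hy
  have hny : (0:ℝ) < ‖y‖ := norm_pos_iff.2 hy
  set dC := Metric.infDist y C with hdC_def
  set dCh := Metric.infDist y Chat with hdCh_def
  have hdC0 : 0 ≤ dC := Metric.infDist_nonneg
  have hdCh0 : 0 ≤ dCh := Metric.infDist_nonneg
  have hdCle : dC ≤ ‖y‖ := infDist_le_norm hC hCne y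
  have hdChle : dCh ≤ ‖y‖ := infDist_le_norm hChat hChatne y
  have htrans1 : dCh ≤ dC + δ * ‖y‖ :=
    infDist_transfer hC hCne hChat hChatne hδ0
      (fun u hu hnu => unit_infDist_le_disc_left hChat hChatne hu hnu) y
  have htrans2 : dC ≤ dCh + δ * ‖y‖ := by
    have := infDist_transfer hChat hChatne hC hCne hδ0
      (fun u hu hnu => unit_infDist_le_disc_right hC hCne hu hnu) y
    -- this : infDist y C ≤ infDist y Chat + (max ... ...) * ‖y‖ ; careful: disc is symmetric enough
    exact this
  constructor
  · -- part (i)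
    intro hang
    have hdq : dC / ‖y‖ ≤ 1 := div_le_one_of_le₀ hdCle hny.le
    have hdq0 : 0 ≤ dC / ‖y‖ := div_nonneg hdC0 hny.le
    -- dC/‖y‖ ≤ sin τ
    have h1 : dC / ‖y‖ ≤ Real.sin τ := by
      have := Real.sin_le_sin_of_le_of_le_pi_div_two
        (Real.neg_pi_div_two_le_arcsin _) hτlt.le hang
      rwa [Real.sin_arcsin (by linarith) hdq] at this
    have h2 : dCh / ‖y‖ ≤ Real.sin τ + δ := by
      rw [div_le_iff₀ hny]
      calc dCh ≤ dC + δ * ‖y‖ := htrans1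
        _ ≤ Real.sin τ * ‖y‖ + δ * ‖y‖ := by
            nlinarith [(div_le_iff₀ hny).1 h1]
        _ = (Real.sin τ + δ) * ‖y‖ := by ring
    calc coneAngle y Chat = Real.arcsin (dCh / ‖y‖) := rfl
      _ ≤ Real.arcsin (Real.sin τ + δ) := Real.monotone_arcsin h2
      _ ≤ ξ := hξl
  · -- part (ii), contrapositive
    intro hang
    by_contra hcon
    push_neg at hcon
    -- hcon : coneAngle y Chat ≤ ξ
    have hdq : dCh / ‖y‖ ≤ 1 := div_le_one_of_le₀ hdChle hny.le
    have hdq0 : 0 ≤ dCh / ‖y‖ := div_nonneg hdCh0 hny.le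
    have harc : Real.arcsin (dCh / ‖y‖) ≤ Real.arcsin (Real.sin ((1 + η) * τ) - δ) :=
      le_trans hcon hξu
    have h1 : dCh / ‖y‖ ≤ Real.sin ((1 + η) * τ) - δ := by
      have := Real.sin_le_sin_of_le_of_le_pi_div_two
        (Real.neg_pi_div_two_le_arcsin _) (Real.arcsin_le_pi_div_two _) harc
      rwa [Real.sin_arcsin (by linarith) hdq,
        Real.sin_arcsin (by linarith) hb1] at this
    have h2 : dC / ‖y‖ ≤ Real.sin ((1 + η) * τ) := by
      rw [div_le_iff₀ hny]
      calc dC ≤ dCh + δ * ‖y‖ := htrans2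
        _ ≤ (Real.sin ((1 + η) * τ) - δ) * ‖y‖ + δ * ‖y‖ := by
            nlinarith [(div_le_iff₀ hny).1 h1]
        _ = Real.sin ((1 + η) * τ) * ‖y‖ := by ring
    have h3 : coneAngle y C ≤ (1 + η) * τ := by
      calc coneAngle y C = Real.arcsin (dC / ‖y‖) := rfl
        _ ≤ Real.arcsin (Real.sin ((1 + η) * τ)) := Real.monotone_arcsin h2
        _ = (1 + η) * τ := Real.arcsin_sin (by nlinarith [Real.pi_pos]) hmax.le
    linarith
end

section
/- Let σ be a finite Borel measure on the unit sphere S² ⊆ ℝ³ that assigns positive measure to every nonempty relatively open subset of S², and let ȳ : S² → ℝ^m be continuous. Define C₀ = { ∫_{S²} f(u)·ȳ(u) dσ(u) : f : S² → ℝ nonnegative and σ-integrable }. Then the closure of C₀ equals the closure of the conic hull of { ȳ(u) : u ∈ S² }. In particular, δ(C₀, conic hull of {ȳ(u) : u ∈ S²}) = 0. -/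
open MeasureTheory

/-- The unit sphere S² in ℝ³, as a subtype. -/
abbrev Sphere2 : Type := Metric.sphere (0 : EuclideanSpace ℝ (Fin 3)) 1

/-- The conic hull of a set `A`: all finite nonnegative combinations of elements of `A`. -/
def conicHull {m : ℕ} (A : Set (EuclideanSpace ℝ (Fin m))) : Set (EuclideanSpace ℝ (Fin m)) :=
  {y | ∃ (k : ℕ) (c : Fin k → ℝ) (a : Fin k → EuclideanSpace ℝ (Fin m)),
      (∀ i, 0 ≤ c i) ∧ (∀ i, a i ∈ A) ∧ y = ∑ i, c i • a i}

/-- The cone of images under nonnegative integrable illuminations. -/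
def imageCone {m : ℕ} (σ : Measure Sphere2) (ybar : Sphere2 → EuclideanSpace ℝ (Fin m)) :
    Set (EuclideanSpace ℝ (Fin m)) :=
  {y | ∃ f : Sphere2 → ℝ, (∀ u, 0 ≤ f u) ∧ Integrable f σ ∧ y = ∫ u, f u • ybar u ∂σ}

/- ### Auxiliary lemmas about `conicHull` -/

lemma zero_mem_conicHull {m : ℕ} (A : Set (EuclideanSpace ℝ (Fin m))) :
    (0 : EuclideanSpace ℝ (Fin m)) ∈ conicHull A := by
  exact ⟨0, Fin.elim0, Fin.elim0, fun i => i.elim0, fun i => i.elim0, by simp⟩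

lemma smul_mem_conicHull {m : ℕ} {A : Set (EuclideanSpace ℝ (Fin m))} {c : ℝ} (hc : 0 ≤ c)
    {y : EuclideanSpace ℝ (Fin m)} (hy : y ∈ conicHull A) : c • y ∈ conicHull A := by
  obtain ⟨k, co, a, hco, ha, rfl⟩ := hy
  exact ⟨k, fun i => c * co i, a, fun i => mul_nonneg hc (hco i), ha, by
    rw [Finset.smul_sum]; simp [mul_smul]⟩

lemma add_mem_conicHull {m : ℕ} {A : Set (EuclideanSpace ℝ (Fin m))}
    {x y : EuclideanSpace ℝ (Fin m)} (hx : x ∈ conicHull A) (hy : y ∈ conicHull A) :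
    x + y ∈ conicHull A := by
  obtain ⟨k₁, c₁, a₁, hc₁, ha₁, rfl⟩ := hx
  obtain ⟨k₂, c₂, a₂, hc₂, ha₂, rfl⟩ := hy
  refine ⟨k₁ + k₂, Fin.append c₁ c₂, Fin.append a₁ a₂, ?_, ?_, ?_⟩
  · intro i
    refine Fin.addCases (fun j => ?_) (fun j => ?_) i
    · simpa [Fin.append_left] using hc₁ j
    · simpa [Fin.append_right] using hc₂ j
  · intro i
    refine Fin.addCases (fun j => ?_) (fun j => ?_) i
    · simpa [Fin.append_left] using ha₁ j
    · simpa [Fin.append_right] using ha₂ j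
  · rw [Fin.sum_univ_add]
    simp [Fin.append_left, Fin.append_right]

lemma convex_conicHull {m : ℕ} (A : Set (EuclideanSpace ℝ (Fin m))) :
    Convex ℝ (conicHull A) := by
  intro x hx y hy a b ha hb _
  exact add_mem_conicHull (smul_mem_conicHull ha hx) (smul_mem_conicHull hb hy)

lemma single_mem_conicHull {m : ℕ} {A : Set (EuclideanSpace ℝ (Fin m))} {c : ℝ} (hc : 0 ≤ c)
    {a : EuclideanSpace ℝ (Fin m)} (ha : a ∈ A) : c • a ∈ conicHull A :=
  ⟨1, fun _ => c, fun _ => a, fun _ => hc, fun _ => ha, by simp⟩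

/- ### Generic closure lemmas -/

lemma closure_add_mem {E : Type*} [NormedAddCommGroup E] {S : Set E}
    (h : ∀ x ∈ S, ∀ y ∈ S, x + y ∈ S) {x y : E}
    (hx : x ∈ closure S) (hy : y ∈ closure S) : x + y ∈ closure S := by
  rcases mem_closure_iff_seq_limit.1 hx with ⟨a, ha, hax⟩
  rcases mem_closure_iff_seq_limit.1 hy with ⟨b, hb, hby⟩
  exact mem_closure_of_tendsto (hax.add hby)
    (Filter.Eventually.of_forall fun n => h _ (ha n) _ (hb n))

lemma closure_smul_mem {E : Type*} [NormedAddCommGroup E] [NormedSpace ℝ E] {S : Set E}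
    {c : ℝ} (h : ∀ x ∈ S, c • x ∈ S) {x : E}
    (hx : x ∈ closure S) : c • x ∈ closure S := by
  rcases mem_closure_iff_seq_limit.1 hx with ⟨a, ha, hax⟩
  exact mem_closure_of_tendsto (hax.const_smul c)
    (Filter.Eventually.of_forall fun n => h _ (ha n))

/- ### Auxiliary lemmas about `imageCone` -/

lemma ybar_bound {m : ℕ} {ybar : Sphere2 → EuclideanSpace ℝ (Fin m)} (hy : Continuous ybar) :
    ∃ M : ℝ, ∀ u, ‖ybar u‖ ≤ M := by
  obtain ⟨M, hM⟩ := (isCompact_range (hy.norm)).bddAbove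
  exact ⟨M, fun u => hM ⟨u, rfl⟩⟩

lemma integrable_smul_ybar {m : ℕ} (σ : Measure Sphere2) [IsFiniteMeasure σ]
    {ybar : Sphere2 → EuclideanSpace ℝ (Fin m)} (hy : Continuous ybar)
    {f : Sphere2 → ℝ} (hf : Integrable f σ) :
    Integrable (fun u => f u • ybar u) σ := by
  obtain ⟨M, hM⟩ := ybar_bound hy
  refine (hf.norm.const_mul M).mono'
    (hf.aestronglyMeasurable.smul hy.aestronglyMeasurable) ?_
  filter_upwards with u
  rw [norm_smul]
  calc ‖f u‖ * ‖ybar u‖ ≤ ‖f u‖ * M := by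
        exact mul_le_mul_of_nonneg_left (hM u) (norm_nonneg _)
    _ = M * ‖f u‖ := mul_comm _ _

lemma zero_mem_imageCone {m : ℕ} (σ : Measure Sphere2)
    (ybar : Sphere2 → EuclideanSpace ℝ (Fin m)) :
    (0 : EuclideanSpace ℝ (Fin m)) ∈ imageCone σ ybar :=
  ⟨0, fun _ => le_refl 0, integrable_zero _ _ _, by simp⟩

lemma add_mem_imageCone {m : ℕ} (σ : Measure Sphere2) [IsFiniteMeasure σ]
    {ybar : Sphere2 → EuclideanSpace ℝ (Fin m)} (hy : Continuous ybar)
    {x y : EuclideanSpace ℝ (Fin m)} (hx : x ∈ imageCone σ ybar)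
    (hyy : y ∈ imageCone σ ybar) : x + y ∈ imageCone σ ybar := by
  obtain ⟨f, hf0, hfi, rfl⟩ := hx
  obtain ⟨g, hg0, hgi, rfl⟩ := hyy
  refine ⟨f + g, fun u => add_nonneg (hf0 u) (hg0 u), hfi.add hgi, ?_⟩
  rw [← integral_add (integrable_smul_ybar σ hy hfi) (integrable_smul_ybar σ hy hgi)]
  congr 1
  funext u
  simp [add_smul]

lemma smul_mem_imageCone {m : ℕ} (σ : Measure Sphere2) [IsFiniteMeasure σ]
    {ybar : Sphere2 → EuclideanSpace ℝ (Fin m)}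
    {c : ℝ} (hc : 0 ≤ c) {x : EuclideanSpace ℝ (Fin m)} (hx : x ∈ imageCone σ ybar) :
    c • x ∈ imageCone σ ybar := by
  obtain ⟨f, hf0, hfi, rfl⟩ := hx
  refine ⟨fun u => c * f u, fun u => mul_nonneg hc (hf0 u), hfi.const_mul c, ?_⟩
  rw [← integral_smul]
  congr 1
  funext u
  rw [mul_smul]

/- ### The key approximation lemma -/

lemma ybar_mem_closure_imageCone {m : ℕ} (σ : Measure Sphere2) [IsFiniteMeasure σ]
    (hσ : ∀ U : Set Sphere2, IsOpen U → U.Nonempty → 0 < σ U)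
    {ybar : Sphere2 → EuclideanSpace ℝ (Fin m)} (hy : Continuous ybar) (u₀ : Sphere2) :
    ybar u₀ ∈ closure (imageCone σ ybar) := by
  rw [Metric.mem_closure_iff]
  intro ε hε
  obtain ⟨δ, hδ, hball⟩ := Metric.continuous_iff.1 hy u₀ (ε/2) (by positivity)
  set U := Metric.ball u₀ δ with hU
  have hUopen : IsOpen U := Metric.isOpen_ball
  have hUpos : 0 < σ U := hσ U hUopen ⟨u₀, Metric.mem_ball_self hδ⟩
  have hUfin : σ U < ⊤ := measure_lt_top σ U
  set s := (σ U).toReal with hs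
  have hspos : 0 < s := ENNReal.toReal_pos hUpos.ne' hUfin.ne
  set f := fun v => s⁻¹ * U.indicator (fun _ => (1:ℝ)) v with hf
  have hf0 : ∀ v, 0 ≤ f v := fun v =>
    mul_nonneg (by positivity) (Set.indicator_nonneg (fun _ _ => zero_le_one) v)
  have hfi : Integrable f σ :=
    ((integrable_const (1:ℝ)).indicator hUopen.measurableSet).const_mul _
  refine ⟨∫ v, f v • ybar v ∂σ, ⟨f, hf0, hfi, rfl⟩, ?_⟩
  have h1 : (fun v => f v • ybar v) = fun v => s⁻¹ • (U.indicator ybar v) := by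
    funext v
    by_cases hv : v ∈ U <;> simp [hf, hv, mul_smul]
  have key : ∫ v, f v • ybar v ∂σ = s⁻¹ • ∫ v in U, ybar v ∂σ := by
    rw [h1, integral_smul, integral_indicator hUopen.measurableSet]
  have hyint : Integrable ybar σ :=
    hy.integrable_of_hasCompactSupport (HasCompactSupport.of_compactSpace ybar)
  have hconst : ∫ _ in U, (ybar u₀) ∂σ = s • ybar u₀ := by
    rw [setIntegral_const]
    rfl
  have hdiff : ‖(∫ v in U, ybar v ∂σ) - s • ybar u₀‖ ≤ ε / 2 * s := by
    rw [← hconst, ← integral_sub hyint.integrableOn (integrableOn_const hUfin.ne)]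
    refine norm_setIntegral_le_of_norm_le_const hUfin fun x hx => ?_
    have := hball x (by simpa [hU, Metric.mem_ball] using hx)
    rw [← dist_eq_norm]
    exact le_of_lt this
  rw [key, dist_eq_norm, norm_sub_rev]
  have : s⁻¹ • (∫ v in U, ybar v ∂σ) - ybar u₀
      = s⁻¹ • ((∫ v in U, ybar v ∂σ) - s • ybar u₀) := by
    rw [smul_sub, smul_smul, inv_mul_cancel₀ hspos.ne', one_smul]
  rw [this, norm_smul, norm_inv, Real.norm_of_nonneg hspos.le]
  calc s⁻¹ * ‖(∫ v in U, ybar v ∂σ) - s • ybar u₀‖ ≤ s⁻¹ * (ε / 2 * s) := by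
        exact mul_le_mul_of_nonneg_left hdiff (by positivity)
    _ = ε / 2 := by field_simp
    _ < ε := by linarith

/- ### Integrals lie in the closed conic hull -/

lemma imageCone_subset_closure_conicHull {m : ℕ} (σ : Measure Sphere2) [IsFiniteMeasure σ]
    {ybar : Sphere2 → EuclideanSpace ℝ (Fin m)} (hy : Continuous ybar) :
    imageCone σ ybar ⊆ closure (conicHull (Set.range ybar)) := by
  rintro y ⟨f, hf0, hfi, rfl⟩
  by_cases hzero : σ = 0
  · subst hzero
    simp only [integral_zero_measure]
    exact subset_closure (zero_mem_conicHull _)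
  · haveI : NeZero σ := ⟨hzero⟩
    have hD : Convex ℝ (closure (conicHull (Set.range ybar))) := (convex_conicHull _).closure
    have hint : Integrable (fun u => f u • ybar u) σ := integrable_smul_ybar σ hy hfi
    have hmem : ∀ᵐ u ∂σ, f u • ybar u ∈ closure (conicHull (Set.range ybar)) :=
      Filter.Eventually.of_forall fun u =>
        subset_closure (single_mem_conicHull (hf0 u) ⟨u, rfl⟩)
    have havg := hD.average_mem isClosed_closure hmem hint
    rw [average_eq] at havg
    have htne : (σ Set.univ).toReal ≠ 0 := by
      refine ENNReal.toReal_ne_zero.2 ⟨?_, (measure_lt_top σ _).ne⟩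
      simpa [Measure.measure_univ_eq_zero] using hzero
    have heq : ∫ u, f u • ybar u ∂σ
        = (σ Set.univ).toReal • ((σ Set.univ).toReal⁻¹ • ∫ u, f u • ybar u ∂σ) := by
      rw [smul_smul, mul_inv_cancel₀ htne, one_smul]
    rw [heq]
    exact closure_smul_mem (fun x hx => smul_mem_conicHull ENNReal.toReal_nonneg hx) havg

theorem stmt3 {m : ℕ} (σ : Measure Sphere2) [IsFiniteMeasure σ]
    (hσ : ∀ U : Set Sphere2, IsOpen U → U.Nonempty → 0 < σ U)
    (ybar : Sphere2 → EuclideanSpace ℝ (Fin m)) (hy : Continuous ybar) :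
    closure (imageCone σ ybar) = closure (conicHull (Set.range ybar)) ∧
    coneDisc (imageCone σ ybar) (conicHull (Set.range ybar)) = 0 := by
  have hsub1 : imageCone σ ybar ⊆ closure (conicHull (Set.range ybar)) :=
    imageCone_subset_closure_conicHull σ hy
  have hsub2 : conicHull (Set.range ybar) ⊆ closure (imageCone σ ybar) := by
    rintro y ⟨k, c, a, hc, ha, rfl⟩
    have hterm : ∀ i, c i • a i ∈ closure (imageCone σ ybar) := fun i => by
      obtain ⟨u, hu⟩ := ha i
      rw [← hu]
      exact closure_smul_mem (fun x hx => smul_mem_imageCone σ (hc i) hx)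
        (ybar_mem_closure_imageCone σ hσ hy u)
    exact Finset.sum_induction _ (· ∈ closure (imageCone σ ybar))
      (fun x y hx hy' => closure_add_mem (fun a ha b hb => add_mem_imageCone σ hy ha hb) hx hy')
      (subset_closure (zero_mem_imageCone σ ybar)) (fun i _ => hterm i)
  have hce : closure (imageCone σ ybar) = closure (conicHull (Set.range ybar)) :=
    subset_antisymm (closure_minimal hsub1 isClosed_closure)
      (closure_minimal hsub2 isClosed_closure)
  refine ⟨hce, ?_⟩
  have h1 : ∀ y : {y : EuclideanSpace ℝ (Fin m) // y ∈ imageCone σ ybar ∧ ‖y‖ = 1},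
      Metric.infDist (y : EuclideanSpace ℝ (Fin m)) (conicHull (Set.range ybar)) = 0 := by
    rintro ⟨y, hy1, -⟩
    rw [← Metric.infDist_closure, ← hce]
    exact Metric.infDist_zero_of_mem (subset_closure hy1)
  have h2 : ∀ y : {y : EuclideanSpace ℝ (Fin m) // y ∈ conicHull (Set.range ybar) ∧ ‖y‖ = 1},
      Metric.infDist (y : EuclideanSpace ℝ (Fin m)) (imageCone σ ybar) = 0 := by
    rintro ⟨y, hy1, -⟩
    rw [← Metric.infDist_closure]
    exact Metric.infDist_zero_of_mem (hsub2 hy1)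
  have z1 : (⨆ y : {y : EuclideanSpace ℝ (Fin m) // y ∈ imageCone σ ybar ∧ ‖y‖ = 1},
      Metric.infDist (y : EuclideanSpace ℝ (Fin m)) (conicHull (Set.range ybar))) = 0 := by
    rw [show (fun y : {y : EuclideanSpace ℝ (Fin m) // y ∈ imageCone σ ybar ∧ ‖y‖ = 1} =>
        Metric.infDist (y : EuclideanSpace ℝ (Fin m)) (conicHull (Set.range ybar)))
        = fun _ => (0:ℝ) from funext h1]
    cases isEmpty_or_nonempty {y : EuclideanSpace ℝ (Fin m) // y ∈ imageCone σ ybar ∧ ‖y‖ = 1}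
    · exact Real.iSup_of_isEmpty _
    · exact ciSup_const
  have z2 : (⨆ y : {y : EuclideanSpace ℝ (Fin m) // y ∈ conicHull (Set.range ybar) ∧ ‖y‖ = 1},
      Metric.infDist (y : EuclideanSpace ℝ (Fin m)) (imageCone σ ybar)) = 0 := by
    rw [show (fun y : {y : EuclideanSpace ℝ (Fin m) // y ∈ conicHull (Set.range ybar) ∧ ‖y‖ = 1} =>
        Metric.infDist (y : EuclideanSpace ℝ (Fin m)) (imageCone σ ybar))
        = fun _ => (0:ℝ) from funext h2]
    cases isEmpty_or_nonempty
        {y : EuclideanSpace ℝ (Fin m) // y ∈ conicHull (Set.range ybar) ∧ ‖y‖ = 1}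
    · exact Real.iSup_of_isEmpty _
    · exact ciSup_const
  rw [coneDisc, z1, z2, max_self]
end

section
/- Let (O; Δ₁,…,Δ_N; n₁,…,n_N) be a triangulated object in ℝ³ and let ρ : ∂O → (0,1] be strictly positive. Then for every u ∈ S², the shadowed region S[u] = {x ∈ ∂O : D̄[u](x) = 0} is a closed subset of ℝ³ (equivalently, S[u] is relatively closed in ∂O). -/
open MeasureTheory
open scoped Classical
open scoped RealInnerProductSpace

/-- A point in ℝ³ (Euclidean). -/
abbrev E3 : Type := EuclideanSpace ℝ (Fin 3)

/-- A triangulated object: a compact set `O ⊆ ℝ³` whose topological boundary is the union of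
`N` triangles (each the convex hull of three affinely independent points), where two distinct
triangles intersect in the empty set, a common vertex, or a common edge, and each face carries
a unit normal orthogonal to the face. -/
structure TriangulatedObject (N : ℕ) where
  carrier : Set E3
  isCompact : IsCompact carrier
  v : Fin N → Fin 3 → E3
  indep : ∀ i, AffineIndependent ℝ (v i)
  normal : Fin N → E3
  normal_unit : ∀ i, ‖normal i‖ = 1
  normal_orth : ∀ i k₁ k₂, (inner ℝ (normal i) (v i k₁ - v i k₂) : ℝ) = 0
  boundary_eq : frontier carrier = ⋃ i, convexHull ℝ (Set.range (v i))
  faces_inter : ∀ i j, i ≠ j →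
    convexHull ℝ (Set.range (v i)) ∩ convexHull ℝ (Set.range (v j)) = ∅ ∨
    (∃ k₁ k₂, v i k₁ = v j k₂ ∧
      convexHull ℝ (Set.range (v i)) ∩ convexHull ℝ (Set.range (v j)) = {v i k₁}) ∨
    (∃ k₁ k₁' k₂ k₂', k₁ ≠ k₁' ∧ v i k₁ = v j k₂ ∧ v i k₁' = v j k₂' ∧
      convexHull ℝ (Set.range (v i)) ∩ convexHull ℝ (Set.range (v j))
        = segment ℝ (v i k₁) (v i k₁'))

namespace TriangulatedObject

variable {N : ℕ}

/-- The `i`-th face Δᵢ. -/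
def face (T : TriangulatedObject N) (i : Fin N) : Set E3 :=
  convexHull ℝ (Set.range (T.v i))

/-- The set `E` of edge points: union of all edges of all faces. -/
def edges (T : TriangulatedObject N) : Set E3 :=
  ⋃ i, ⋃ k₁, ⋃ k₂, ⋃ (_ : k₁ ≠ k₂), segment ℝ (T.v i k₁) (T.v i k₂)

/-- The boundary ∂O of the object. -/
def bdry (T : TriangulatedObject N) : Set E3 := frontier T.carrier

/-- The set Φ = ∂O \ E of face-interior points. -/
def Phi (T : TriangulatedObject N) : Set E3 := T.bdry \ T.edges

/-- The outward normal at a boundary point: the normal of (the) face containing `x`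
(for `x ∈ Φ` this face is unique); junk value `0` off the faces. -/
noncomputable def normalAt (T : TriangulatedObject N) (x : E3) : E3 :=
  if h : ∃ i, x ∈ T.face i then T.normal h.choose else 0

/-- The point-direction visibility indicator ν(x,u): 1 if the ray from `x` in direction `u`
meets `O` only at `x`, else 0. -/
noncomputable def vis (T : TriangulatedObject N) (x u : E3) : ℝ :=
  if {p : E3 | ∃ t : ℝ, 0 ≤ t ∧ p = x + t • u} ∩ T.carrier = {x} then 1 else 0

/-- The direct point-illumination irradiance D̄[u](x) = ρ(x)·⟨n(x),u⟩₊·ν(x,u) on Φ, 0 on E. -/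
noncomputable def Dbar (T : TriangulatedObject N) (ρ : E3 → ℝ) (u x : E3) : ℝ :=
  if x ∈ T.Phi then ρ x * max (inner ℝ (T.normalAt x) u : ℝ) 0 * T.vis x u else 0

/-- The shadowed region S[u] ⊆ ∂O. -/
def shadow (T : TriangulatedObject N) (ρ : E3 → ℝ) (u : E3) : Set E3 :=
  {x ∈ T.bdry | T.Dbar ρ u x = 0}

variable (T : TriangulatedObject N)

lemma face_compact' (i : Fin N) : IsCompact (T.face i) :=
  (Set.finite_range _).isCompact_convexHull ℝ

lemma edges_closed' : IsClosed T.edges := by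
  refine isClosed_iUnion_of_finite fun i => isClosed_iUnion_of_finite fun k₁ =>
    isClosed_iUnion_of_finite fun k₂ => isClosed_iUnion_of_finite fun _ => ?_
  rw [← convexHull_pair]
  exact ((Set.toFinite _).isCompact_convexHull ℝ).isClosed

lemma vertex_mem_edges' (i : Fin N) (k : Fin 3) : T.v i k ∈ T.edges := by
  obtain ⟨k', hk'⟩ := exists_ne k
  exact Set.mem_iUnion.2 ⟨i, Set.mem_iUnion.2 ⟨k, Set.mem_iUnion.2 ⟨k',
    Set.mem_iUnion.2 ⟨hk'.symm, left_mem_segment ℝ _ _⟩⟩⟩⟩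

lemma face_unique' {x : E3} {i j : Fin N} (hx : x ∉ T.edges)
    (hi : x ∈ T.face i) (hj : x ∈ T.face j) : i = j := by
  by_contra hne
  have hmem : x ∈ convexHull ℝ (Set.range (T.v i)) ∩ convexHull ℝ (Set.range (T.v j)) := ⟨hi, hj⟩
  rcases T.faces_inter i j hne with h | ⟨k₁, k₂, hv, h⟩ | ⟨k₁, k₁', k₂, k₂', hkk, hv, hv', h⟩
  · rw [h] at hmem; exact hmem
  · rw [h] at hmem
    exact hx (hmem ▸ T.vertex_mem_edges' i k₁)
  · rw [h] at hmem
    exact hx (Set.mem_iUnion.2 ⟨i, Set.mem_iUnion.2 ⟨k₁, Set.mem_iUnion.2 ⟨k₁',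
      Set.mem_iUnion.2 ⟨hkk, hmem⟩⟩⟩⟩)

lemma inner_isLinearMap (n : E3) : IsLinearMap ℝ (fun y : E3 => (inner ℝ n y : ℝ)) := by
  constructor
  · intro a b; exact inner_add_right n a b
  · intro c a; rw [real_inner_smul_right]; rfl

lemma face_plane' (i : Fin N) {y : E3} (hy : y ∈ T.face i) :
    (inner ℝ (T.normal i) y : ℝ) = inner ℝ (T.normal i) (T.v i 0) := by
  have hconv : Convex ℝ {z : E3 | (inner ℝ (T.normal i) z : ℝ) = inner ℝ (T.normal i) (T.v i 0)} :=
    convex_hyperplane (inner_isLinearMap (T.normal i)) _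
  have hsub : T.face i ⊆ {z : E3 | (inner ℝ (T.normal i) z : ℝ) = inner ℝ (T.normal i) (T.v i 0)} := by
    refine convexHull_min ?_ hconv
    rintro z ⟨k, rfl⟩
    have h := T.normal_orth i k 0
    rw [inner_sub_right] at h
    simp only [Set.mem_setOf_eq]
    linarith
  exact hsub hy

lemma exists_face' {x : E3} (hx : x ∈ T.bdry) : ∃ i, x ∈ T.face i := by
  have h : x ∈ ⋃ i, convexHull ℝ (Set.range (T.v i)) := T.boundary_eq ▸ hx
  exact Set.mem_iUnion.1 h

lemma normalAt_eq' {x : E3} {i : Fin N} (hx : x ∉ T.edges) (hi : x ∈ T.face i) :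
    T.normalAt x = T.normal i := by
  have h : ∃ j, x ∈ T.face j := ⟨i, hi⟩
  rw [normalAt, dif_pos h]
  exact congrArg T.normal (T.face_unique' hx h.choose_spec hi)

end TriangulatedObject

theorem stmt7 {N : ℕ} (T : TriangulatedObject N) (ρ : E3 → ℝ)
    (hρ : ∀ x ∈ T.bdry, 0 < ρ x ∧ ρ x ≤ 1)
    (u : E3) (hu : ‖u‖ = 1) :
    IsClosed (T.shadow ρ u) := by
  have hOc : IsClosed T.carrier := T.isCompact.isClosed
  rw [← isSeqClosed_iff_isClosed]
  intro xs x hmem hlim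
  have hbx : x ∈ T.bdry :=
    isClosed_frontier.mem_of_tendsto hlim (Filter.Eventually.of_forall fun n => (hmem n).1)
  refine ⟨hbx, ?_⟩
  by_contra hD
  have hPhi : x ∈ T.Phi := by
    by_contra h
    exact hD (by rw [TriangulatedObject.Dbar, if_neg h])
  have hprod : ρ x * max (inner ℝ (T.normalAt x) u : ℝ) 0 * T.vis x u ≠ 0 := by
    intro h
    exact hD (by rw [TriangulatedObject.Dbar, if_pos hPhi]; exact h)
  have hxE : x ∉ T.edges := hPhi.2
  obtain ⟨i, hfi⟩ := T.exists_face' hbx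
  have hnAt : T.normalAt x = T.normal i := T.normalAt_eq' hxE hfi
  set n : E3 := T.normal i with hn
  have hnu : (0 : ℝ) < inner ℝ n u := by
    rcases lt_or_ge 0 (inner ℝ n u : ℝ) with h | h
    · exact h
    · exact absurd (by rw [hnAt, max_eq_right h, mul_zero, zero_mul]) hprod
  have hvisx : {p : E3 | ∃ t : ℝ, 0 ≤ t ∧ p = x + t • u} ∩ T.carrier = {x} := by
    by_contra h
    exact hprod (by rw [TriangulatedObject.vis, if_neg h, mul_zero])
  -- the set to avoid: edges and other faces
  set K : Set E3 := T.edges ∪ ⋃ j ∈ {j : Fin N | j ≠ i}, T.face j with hK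
  have hKclosed : IsClosed K :=
    T.edges_closed'.union ((Set.toFinite _).isClosed_biUnion fun j _ => (T.face_compact' j).isClosed)
  have hxK : x ∉ K := by
    rintro (h | h)
    · exact hxE h
    · obtain ⟨j, hj, hjx⟩ := Set.mem_iUnion₂.1 h
      exact hj (T.face_unique' hxE hjx hfi)
  obtain ⟨r, hr, hball⟩ := Metric.isOpen_iff.1 hKclosed.isOpen_compl x hxK
  have hballface : ∀ y ∈ Metric.ball x r, y ∈ T.bdry → y ∈ T.face i ∧ y ∉ T.edges := by
    intro y hy hyb
    obtain ⟨j, hj⟩ := T.exists_face' hyb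
    have hyK : y ∉ K := hball hy
    have hji : j = i := by
      by_contra hne
      exact hyK (Or.inr (Set.mem_iUnion₂.2 ⟨j, hne, hj⟩))
    exact ⟨hji ▸ hj, fun h => hyK (Or.inl h)⟩
  have hxplane : ∀ y ∈ T.face i, (inner ℝ n y : ℝ) = inner ℝ n x := by
    intro y hy
    rw [T.face_plane' i hy, T.face_plane' i hfi]
  -- the open upper half-ball
  set Bp : Set E3 := Metric.ball x r ∩ {y : E3 | (inner ℝ n x : ℝ) < inner ℝ n y} with hBp
  have hBpconv : Convex ℝ Bp :=
    (convex_ball x r).inter (convex_halfSpace_gt (TriangulatedObject.inner_isLinearMap n) _)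
  have hBpfront : ∀ y ∈ Bp, y ∉ frontier T.carrier := by
    rintro y ⟨hy1, hy2⟩ hyf
    have hyface := (hballface y hy1 hyf).1
    rw [Set.mem_setOf_eq, hxplane y hyface] at hy2
    exact lt_irrefl _ hy2
  have hsplit : Bp ⊆ interior T.carrier ∨ Bp ⊆ T.carrierᶜ := by
    refine (hBpconv.isPreconnected).subset_or_subset isOpen_interior hOc.isOpen_compl ?_ ?_
    · exact Set.disjoint_left.2 fun a ha hb => hb (interior_subset ha)
    · intro y hy
      rcases Classical.em (y ∈ T.carrier) with h | h
      · left
        by_contra hint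
        exact hBpfront y hy ⟨subset_closure h, hint⟩
      · exact Or.inr h
  rcases hsplit with hBpin | hBpout
  · -- interior case : x + (r/2) • u lies in O, contradicting visibility of x
    have hy : x + (r / 2) • u ∈ Bp := by
      constructor
      · rw [Metric.mem_ball, dist_eq_norm]
        simp only [add_sub_cancel_left]
        rw [norm_smul, hu, Real.norm_eq_abs, abs_of_pos (by linarith), mul_one]
        linarith
      · rw [Set.mem_setOf_eq, inner_add_right, real_inner_smul_right]
        nlinarith
    have hyc : x + (r / 2) • u ∈ T.carrier := interior_subset (hBpin hy)
    have hsing : x + (r / 2) • u ∈ ({x} : Set E3) := by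
      rw [← hvisx]
      exact ⟨⟨r / 2, by linarith, rfl⟩, hyc⟩
    rw [Set.mem_singleton_iff] at hsing
    have h0 : (r / 2) • u = 0 := by
      have h := sub_eq_zero.2 hsing
      simpa using h
    have hnorm : ‖(r / 2) • u‖ = 0 := by rw [h0, norm_zero]
    rw [norm_smul, hu, mul_one, Real.norm_eq_abs, abs_of_pos (by linarith)] at hnorm
    linarith
  · -- exterior case
    obtain ⟨R, hR⟩ := T.isCompact.isBounded.subset_closedBall 0
    set M : ℝ := R + ‖x‖ + 1 with hM
    set Kray : Set E3 := (fun t : ℝ => x + t • u) '' Set.Icc (r / 2) M with hKray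
    have hKrayc : IsCompact Kray :=
      isCompact_Icc.image (continuous_const.add (continuous_id.smul continuous_const))
    have hKraydisj : Kray ⊆ T.carrierᶜ := by
      rintro p ⟨t, ht, rfl⟩ hp
      have hsing : x + t • u ∈ ({x} : Set E3) := by
        rw [← hvisx]; exact ⟨⟨t, by linarith [ht.1], rfl⟩, hp⟩
      rw [Set.mem_singleton_iff] at hsing
      have h0 : t • u = 0 := by
        have h := sub_eq_zero.2 hsing
        simpa using h
      have hnorm : ‖t • u‖ = 0 := by rw [h0, norm_zero]
      rw [norm_smul, hu, mul_one, Real.norm_eq_abs, abs_of_pos (by linarith [ht.1])] at hnorm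
      linarith [ht.1]
    obtain ⟨δ, hδ, hthick⟩ := hKrayc.exists_thickening_subset_open hOc.isOpen_compl hKraydisj
    set ε : ℝ := min δ (min (r / 2) 1) with hε
    have hεδ : ε ≤ δ := min_le_left _ _
    have hεr : ε ≤ r / 2 := le_trans (min_le_right _ _) (min_le_left _ _)
    have hε1 : ε ≤ 1 := le_trans (min_le_right _ _) (min_le_right _ _)
    have hεpos : 0 < ε := lt_min hδ (lt_min (by linarith) one_pos)
    obtain ⟨m0, hm0⟩ := Metric.tendsto_atTop.1 hlim ε hεpos
    have hm : dist (xs m0) x < ε := hm0 m0 le_rfl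
    set y : E3 := xs m0 with hy
    have hyb : y ∈ T.bdry := (hmem m0).1
    have hyball : y ∈ Metric.ball x r := by
      rw [Metric.mem_ball]; linarith
    obtain ⟨hyface, hyE⟩ := hballface y hyball hyb
    have hyPhi : y ∈ T.Phi := ⟨hyb, hyE⟩
    have hynAt : T.normalAt y = n := T.normalAt_eq' hyE hyface
    have hDy : T.Dbar ρ u y = 0 := (hmem m0).2
    rw [TriangulatedObject.Dbar, if_pos hyPhi, hynAt] at hDy
    have hρy : 0 < ρ y := (hρ y hyb).1
    have hmax : max (inner ℝ n u : ℝ) 0 = inner ℝ n u := max_eq_left hnu.le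
    rw [hmax] at hDy
    have hvisy : T.vis y u = 0 := by
      rcases mul_eq_zero.1 hDy with h | h
      · rcases mul_eq_zero.1 h with h' | h'
        · exact absurd h' (ne_of_gt hρy)
        · exact absurd h' (ne_of_gt hnu)
      · exact h
    have hvcond : ¬({p : E3 | ∃ t : ℝ, 0 ≤ t ∧ p = y + t • u} ∩ T.carrier = {y}) := by
      intro h
      rw [TriangulatedObject.vis, if_pos h] at hvisy
      exact one_ne_zero hvisy
    have hyc : y ∈ T.carrier := hOc.frontier_subset hyb
    have hysub : ({y} : Set E3) ⊆ {p : E3 | ∃ t : ℝ, 0 ≤ t ∧ p = y + t • u} ∩ T.carrier := by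
      rintro p rfl
      exact ⟨⟨0, le_rfl, by rw [zero_smul, add_zero]⟩, hyc⟩
    have hss : ({y} : Set E3) ⊂ {p : E3 | ∃ t : ℝ, 0 ≤ t ∧ p = y + t • u} ∩ T.carrier :=
      hysub.ssubset_of_ne (fun h => hvcond h.symm)
    obtain ⟨p, hpA, hpy⟩ := Set.exists_of_ssubset hss
    rw [Set.mem_singleton_iff] at hpy
    obtain ⟨⟨t, ht0, rfl⟩, hpc⟩ := hpA
    have htpos : 0 < t := by
      rcases lt_or_eq_of_le ht0 with h | h
      · exact h
      · exact absurd (by rw [← h, zero_smul, add_zero]) hpy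
    have htn : ‖t • u‖ = t := by
      rw [norm_smul, hu, mul_one, Real.norm_eq_abs, abs_of_pos htpos]
    have hyn : ‖y‖ < ‖x‖ + 1 := by
      calc ‖y‖ ≤ ‖x‖ + dist y x := by rw [dist_eq_norm]; exact norm_le_insert' y x
      _ < ‖x‖ + 1 := by linarith
    have hpn : ‖y + t • u‖ ≤ R := by
      have := hR hpc
      rwa [Metric.mem_closedBall, dist_zero_right] at this
    have htM : t ≤ M := by
      have h1 : ‖t • u‖ ≤ ‖y + t • u‖ + ‖y‖ := by
        calc ‖t • u‖ = ‖(y + t • u) - y‖ := by rw [add_sub_cancel_left]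
        _ ≤ ‖y + t • u‖ + ‖y‖ := norm_sub_le _ _
      rw [htn] at h1
      rw [hM]; linarith
    rcases lt_or_ge t (r / 2) with hts | htl
    · -- short ray : p lands in Bp ⊆ Oᶜ, contradiction
      have hpBp : y + t • u ∈ Bp := by
        constructor
        · rw [Metric.mem_ball]
          calc dist (y + t • u) x ≤ dist (y + t • u) y + dist y x := dist_triangle _ _ _
          _ = ‖t • u‖ + dist y x := by rw [dist_eq_norm, add_sub_cancel_left]
          _ < r / 2 + r / 2 := by rw [htn]; linarith
          _ = r := by ring
        · rw [Set.mem_setOf_eq, inner_add_right, real_inner_smul_right, hxplane y hyface]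
          nlinarith
      exact hBpout hpBp hpc
    · -- long ray : p is δ-close to the compact ray tail of x
      have hq : x + t • u ∈ Kray := ⟨t, ⟨htl, htM⟩, rfl⟩
      have hpthick : y + t • u ∈ Metric.thickening δ Kray := by
        rw [Metric.mem_thickening_iff]
        refine ⟨x + t • u, hq, ?_⟩
        rw [dist_add_right]
        calc dist y x < ε := hm
        _ ≤ δ := hεδ
      exact hthick hpthick hpc
end

section
/- Let (O; Δ₁,…,Δ_N; n₁,…,n_N) be a triangulated object in ℝ³ such that O is convex, and let ρ : ∂O → (0,1] be measurable with respect to ℋ² restricted to ∂O, with ρ⋆ = sup_{x∈∂O} ρ(x). Then for all u, u' ∈ S² with ‖u − u'‖₂ ≤ √2, the (lower Lebesgue) integral satisfies ∫_{∂O} (D̄[u](x) − D̄[u'](x))² dℋ²(x) ≤ ρ⋆²·ℋ²(∂O)·‖u − u'‖₂². -/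
open MeasureTheory
open scoped Classical
open scoped RealInnerProductSpace

namespace TriangulatedObject

variable {N : ℕ}

lemma mem_face_iff (T : TriangulatedObject N) (i : Fin N) (z : E3) :
    z ∈ T.face i ↔ ∃ c : Fin 3 → ℝ,
      (∀ k, 0 ≤ c k) ∧ ∑ k, c k = 1 ∧ ∑ k, c k • T.v i k = z := by
  constructor
  · intro hz
    rw [face, convexHull_range_eq_exists_affineCombination] at hz
    obtain ⟨s, w, hw0, hw1, hz⟩ := hz
    refine ⟨fun k => if k ∈ s then w k else 0, fun k => ?_, ?_, ?_⟩
    · dsimp only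
      split_ifs with h
      · exact hw0 k h
      · exact le_refl 0
    · dsimp only
      rw [Finset.sum_ite_mem, Finset.univ_inter, hw1]
    · dsimp only
      rw [← hz, Finset.affineCombination_eq_linear_combination s (T.v i) w hw1]
      simp only [ite_smul, zero_smul]
      rw [Finset.sum_ite_mem, Finset.univ_inter]
  · rintro ⟨c, hc0, hc1, hcz⟩
    rw [face]
    exact mem_convexHull_of_exists_fintype c (T.v i) hc0 hc1
      (fun k => Set.mem_range_self k) hcz

lemma face_subset_carrier (T : TriangulatedObject N) (i : Fin N) :
    T.face i ⊆ T.carrier := fun z hz =>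
  T.isCompact.isClosed.frontier_subset
    (T.boundary_eq ▸ Set.mem_iUnion.2 ⟨i, hz⟩ : z ∈ frontier T.carrier)

lemma coeff_pos (T : TriangulatedObject N) {i : Fin N} {x : E3} (hx : x ∉ T.edges)
    {c : Fin 3 → ℝ} (hc0 : ∀ k, 0 ≤ c k) (hc1 : ∑ k, c k = 1)
    (hcx : ∑ k, c k • T.v i k = x) : ∀ k, 0 < c k := by
  intro k
  rcases (hc0 k).lt_or_eq with h | h
  · exact h
  exfalso
  apply hx
  rw [Fin.sum_univ_three] at hcx hc1
  simp only [edges, Set.mem_iUnion]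
  fin_cases k
  · have h0 : c 0 = 0 := h.symm
    exact ⟨i, 1, 2, by decide,
      c 1, c 2, hc0 1, hc0 2, by linarith, by rw [← hcx, h0]; simp⟩
  · have h0 : c 1 = 0 := h.symm
    exact ⟨i, 0, 2, by decide,
      c 0, c 2, hc0 0, hc0 2, by linarith, by rw [← hcx, h0]; simp⟩
  · have h0 : c 2 = 0 := h.symm
    exact ⟨i, 0, 1, by decide,
      c 0, c 1, hc0 0, hc0 1, by linarith, by rw [← hcx, h0]; simp⟩

/-- The span of the edge vectors of a face is the orthogonal complement of its normal. -/
lemma span_eq_orth (T : TriangulatedObject N) (i : Fin N) :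
    Submodule.span ℝ {T.v i 1 - T.v i 0, T.v i 2 - T.v i 0}
      = (ℝ ∙ T.normal i)ᗮ := by
  have hn : T.normal i ≠ 0 := by
    intro h
    have h1 := T.normal_unit i
    rw [h] at h1
    simp at h1
  have hli0 := (affineIndependent_iff_linearIndependent_vsub ℝ (T.v i) 0).1 (T.indep i)
  let e : Fin 2 → {k : Fin 3 // k ≠ (0 : Fin 3)} := ![⟨1, by decide⟩, ⟨2, by decide⟩]
  have he : Function.Injective e := by decide
  have hli : LinearIndependent ℝ
      (fun j : Fin 2 => T.v i (e j).1 -ᵥ T.v i 0) := hli0.comp e he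
  have heq : (fun j : Fin 2 => T.v i (e j).1 -ᵥ T.v i 0)
      = ![T.v i 1 - T.v i 0, T.v i 2 - T.v i 0] := by
    funext j; fin_cases j <;> rfl
  rw [heq] at hli
  have hrange : Set.range ![T.v i 1 - T.v i 0, T.v i 2 - T.v i 0]
      = {T.v i 1 - T.v i 0, T.v i 2 - T.v i 0} := by
    ext z; simp [Fin.exists_fin_two, or_comm]
  have hle : Submodule.span ℝ {T.v i 1 - T.v i 0, T.v i 2 - T.v i 0}
      ≤ (ℝ ∙ T.normal i)ᗮ := by
    rw [Submodule.span_le]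
    refine Set.insert_subset_iff.2 ⟨?_, Set.singleton_subset_iff.2 ?_⟩ <;>
      · rw [SetLike.mem_coe, Submodule.mem_orthogonal_singleton_iff_inner_right]
        exact T.normal_orth i _ _
  have hdim1 : Module.finrank ℝ (Submodule.span ℝ
      {T.v i 1 - T.v i 0, T.v i 2 - T.v i 0}) = 2 := by
    rw [← hrange, finrank_span_eq_card hli]
    simp
  have hdim2 : Module.finrank ℝ ((ℝ ∙ T.normal i)ᗮ) = 2 := by
    have h3 : Module.finrank ℝ E3 = 3 := by simp [finrank_euclideanSpace]
    have := Submodule.finrank_add_finrank_orthogonal (K := ℝ ∙ T.normal i)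
    rw [finrank_span_singleton hn, h3] at this
    omega
  exact Submodule.eq_of_le_of_finrank_le hle (by rw [hdim1, hdim2])

/-- Key geometric lemma: if the ray from `x` in direction `u` leaves `O` immediately while
the ray in direction `u'` does not, and `⟪n,u⟫ > 0`, then `⟪n,u'⟫ ≤ 0`. -/
lemma key (T : TriangulatedObject N) (hconv : Convex ℝ T.carrier) {x : E3} (hx : x ∈ T.Phi)
    {i : Fin N} (hxi : x ∈ T.face i) {u u' : E3} (hu : ‖u‖ = 1)
    (hvu : {p : E3 | ∃ t : ℝ, 0 ≤ t ∧ p = x + t • u} ∩ T.carrier = {x})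
    {t : ℝ} (ht : 0 < t) (hy : x + t • u' ∈ T.carrier)
    (hnu : (0:ℝ) < ⟪T.normal i, u⟫) : (⟪T.normal i, u'⟫:ℝ) ≤ 0 := by
  by_contra hcon
  push_neg at hcon
  obtain ⟨c, hc0, hc1, hcx⟩ := (T.mem_face_iff i x).1 hxi
  have hcpos := T.coeff_pos hx.2 hc0 hc1 hcx
  rw [Fin.sum_univ_three] at hc1 hcx
  obtain ⟨γ, hγ⟩ : ∃ g : ℝ, g = ⟪T.normal i, u⟫ / ⟪T.normal i, u'⟫ := ⟨_, rfl⟩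
  have hγpos : 0 < γ := hγ ▸ div_pos hnu hcon
  obtain ⟨w, hwdef⟩ : ∃ w : E3, w = u - γ • u' := ⟨_, rfl⟩
  have hworth : w ∈ (ℝ ∙ T.normal i)ᗮ := by
    rw [Submodule.mem_orthogonal_singleton_iff_inner_right, hwdef, inner_sub_right,
      real_inner_smul_right, hγ, div_mul_cancel₀ _ (ne_of_gt hcon), sub_self]
  rw [← T.span_eq_orth i] at hworth
  obtain ⟨a, b, hab⟩ := Submodule.mem_span_pair.1 hworth
  obtain ⟨ε, hεpos, hε1, hε2, hε3⟩ : ∃ e : ℝ, 0 < e ∧ e * (a + b) ≤ c 0 ∧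
      -(c 1) ≤ e * a ∧ -(c 2) ≤ e * b := by
    refine ⟨min (c 0) (min (c 1) (c 2)) / (max |a + b| (max |a| |b|) + 1), ?_, ?_, ?_, ?_⟩
    · have hM : (0:ℝ) ≤ max |a + b| (max |a| |b|) :=
        le_trans (abs_nonneg _) (le_max_left _ _)
      have := lt_min (hcpos 0) (lt_min (hcpos 1) (hcpos 2))
      positivity
    · have h1 : a + b ≤ max |a + b| (max |a| |b|) + 1 := by
        have := le_max_left |a + b| (max |a| |b|)
        have := le_abs_self (a + b); linarith
      have h2 : min (c 0) (min (c 1) (c 2)) ≤ c 0 := min_le_left _ _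
      have hM : (0:ℝ) ≤ max |a + b| (max |a| |b|) :=
        le_trans (abs_nonneg _) (le_max_left _ _)
      have hmn : 0 < min (c 0) (min (c 1) (c 2)) :=
        lt_min (hcpos 0) (lt_min (hcpos 1) (hcpos 2))
      rw [div_mul_eq_mul_div, div_le_iff₀ (by linarith)]
      nlinarith
    · have h1 : -a ≤ max |a + b| (max |a| |b|) + 1 := by
        have g1 := le_max_right |a + b| (max |a| |b|)
        have g2 := le_max_left |a| |b|
        have := neg_abs_le a; linarith
      have h2 : min (c 0) (min (c 1) (c 2)) ≤ c 1 :=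
        le_trans (min_le_right _ _) (min_le_left _ _)
      have hM : (0:ℝ) ≤ max |a + b| (max |a| |b|) :=
        le_trans (abs_nonneg _) (le_max_left _ _)
      have hmn : 0 < min (c 0) (min (c 1) (c 2)) :=
        lt_min (hcpos 0) (lt_min (hcpos 1) (hcpos 2))
      rw [neg_le, div_mul_eq_mul_div, ← neg_div, div_le_iff₀ (by linarith)]
      nlinarith
    · have h1 : -b ≤ max |a + b| (max |a| |b|) + 1 := by
        have g1 := le_max_right |a + b| (max |a| |b|)
        have g2 := le_max_right |a| |b|
        have := neg_abs_le b; linarith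
      have h2 : min (c 0) (min (c 1) (c 2)) ≤ c 2 :=
        le_trans (min_le_right _ _) (min_le_right _ _)
      have hM : (0:ℝ) ≤ max |a + b| (max |a| |b|) :=
        le_trans (abs_nonneg _) (le_max_left _ _)
      have hmn : 0 < min (c 0) (min (c 1) (c 2)) :=
        lt_min (hcpos 0) (lt_min (hcpos 1) (hcpos 2))
      rw [neg_le, div_mul_eq_mul_div, ← neg_div, div_le_iff₀ (by linarith)]
      nlinarith
  have hz : x + ε • w ∈ T.face i := by
    rw [T.mem_face_iff]
    refine ⟨![c 0 - ε * (a + b), c 1 + ε * a, c 2 + ε * b], ?_, ?_, ?_⟩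
    · intro k
      fin_cases k <;> simp <;> linarith
    · rw [Fin.sum_univ_three]
      simp only [Matrix.cons_val_zero, Matrix.cons_val_one, Matrix.head_cons,
        Matrix.cons_val_two, Matrix.tail_cons]
      linarith
    · rw [Fin.sum_univ_three]
      simp only [Matrix.cons_val_zero, Matrix.cons_val_one, Matrix.head_cons,
        Matrix.cons_val_two, Matrix.tail_cons]
      rw [← hcx, ← hab]
      module
  have hzO : x + ε • w ∈ T.carrier := T.face_subset_carrier i hz
  have hden : 0 < t + ε * γ := by positivity
  obtain ⟨s, hs⟩ : ∃ s : ℝ, s = ε * t / (t + ε * γ) := ⟨_, rfl⟩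
  have hspos : 0 < s := by rw [hs]; positivity
  obtain ⟨lam, hlam⟩ : ∃ l : ℝ, l = ε * γ / (t + ε * γ) := ⟨_, rfl⟩
  have hlam0 : 0 ≤ lam := by rw [hlam]; positivity
  have hlam1 : 0 ≤ 1 - lam := by
    have : lam ≤ 1 := by
      rw [hlam, div_le_one hden]; nlinarith
    linarith
  have hmem : (1 - lam) • (x + ε • w) + lam • (x + t • u') ∈ T.carrier :=
    hconv hzO hy hlam1 hlam0 (by ring)
  have hpt : x + s • u = (1 - lam) • (x + ε • w) + lam • (x + t • u') := by
    rw [hwdef, hs, hlam]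
    match_scalars <;> field_simp <;> ring
  have hmem2 : x + s • u ∈
      ({p : E3 | ∃ t : ℝ, 0 ≤ t ∧ p = x + t • u} ∩ T.carrier) :=
    ⟨⟨s, hspos.le, rfl⟩, hpt ▸ hmem⟩
  rw [hvu, Set.mem_singleton_iff, add_eq_left, smul_eq_zero] at hmem2
  rcases hmem2 with h | h
  · exact hspos.ne' h
  · rw [h] at hu; simp at hu

/-- Pointwise Lipschitz-type bound for `Dbar`. -/
lemma pointwise_bound (T : TriangulatedObject N) (hconv : Convex ℝ T.carrier)
    {x : E3} (hx : x ∈ T.bdry) {ρ : E3 → ℝ} (hρx : 0 ≤ ρ x)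
    {u u' : E3} (hu : ‖u‖ = 1) (hu' : ‖u'‖ = 1) :
    (T.Dbar ρ u x - T.Dbar ρ u' x) ^ 2 ≤ (ρ x) ^ 2 * ‖u - u'‖ ^ 2 := by
  by_cases hΦ : x ∈ T.Phi
  swap
  · simp only [Dbar, if_neg hΦ, sub_zero]
    rw [pow_two, mul_zero]
    positivity
  have hex : ∃ j, x ∈ T.face j := by
    have h1 : x ∈ frontier T.carrier := hx
    rw [T.boundary_eq] at h1
    exact Set.mem_iUnion.1 h1
  have hnorm : T.normalAt x = T.normal hex.choose := by rw [normalAt, dif_pos hex]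
  set i := hex.choose with hi
  have hxi : x ∈ T.face i := hex.choose_spec
  have hxO : x ∈ T.carrier := T.isCompact.isClosed.frontier_subset hx
  have hinn : (⟪T.normal i, u - u'⟫ : ℝ) ≤ ‖u - u'‖ := by
    have h2 := real_inner_le_norm (T.normal i) (u - u')
    rwa [T.normal_unit, one_mul] at h2
  have hinn' : (⟪T.normal i, u' - u⟫ : ℝ) ≤ ‖u - u'‖ := by
    have h2 := real_inner_le_norm (T.normal i) (u' - u)
    rwa [T.normal_unit, one_mul, norm_sub_rev] at h2
  have main : |max (⟪T.normal i, u⟫:ℝ) 0 * T.vis x u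
      - max (⟪T.normal i, u'⟫:ℝ) 0 * T.vis x u'| ≤ ‖u - u'‖ := by
    by_cases hv : {p : E3 | ∃ t : ℝ, 0 ≤ t ∧ p = x + t • u} ∩ T.carrier = {x} <;>
      by_cases hv' : {p : E3 | ∃ t : ℝ, 0 ≤ t ∧ p = x + t • u'} ∩ T.carrier = {x}
    · rw [vis, if_pos hv, vis, if_pos hv', mul_one, mul_one]
      refine le_trans (abs_max_sub_max_le_abs _ _ _) ?_
      rw [← inner_sub_right]
      have h2 := abs_real_inner_le_norm (T.normal i) (u - u')
      rwa [T.normal_unit, one_mul] at h2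
    · -- visible in direction u, not in u'
      rw [vis, if_pos hv, vis, if_neg hv', mul_one, mul_zero, sub_zero,
        abs_of_nonneg (le_max_right _ _)]
      rcases le_or_gt (⟪T.normal i, u⟫:ℝ) 0 with hp | hp
      · rw [max_eq_right hp]
        exact norm_nonneg _
      · have hsub : {x} ⊆ {p : E3 | ∃ t : ℝ, 0 ≤ t ∧ p = x + t • u'} ∩ T.carrier :=
          Set.singleton_subset_iff.2 ⟨⟨0, le_refl 0, by simp⟩, hxO⟩
        obtain ⟨p, hpS, hpx⟩ :=
          Set.exists_of_ssubset (hsub.ssubset_of_ne (Ne.symm hv'))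
        obtain ⟨τ, hτ0, rfl⟩ := hpS.1
        have hτ : 0 < τ := hτ0.lt_of_ne fun h => hpx (by rw [← h]; simp)
        have hq := T.key hconv hΦ hxi hu hv hτ hpS.2 hp
        rw [max_eq_left hp.le]
        rw [inner_sub_right] at hinn
        linarith
    · -- visible in direction u', not in u
      rw [vis, if_neg hv, vis, if_pos hv', mul_one, mul_zero, zero_sub, abs_neg,
        abs_of_nonneg (le_max_right _ _)]
      rcases le_or_gt (⟪T.normal i, u'⟫:ℝ) 0 with hp | hp
      · rw [max_eq_right hp]
        exact norm_nonneg _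
      · have hsub : {x} ⊆ {p : E3 | ∃ t : ℝ, 0 ≤ t ∧ p = x + t • u} ∩ T.carrier :=
          Set.singleton_subset_iff.2 ⟨⟨0, le_refl 0, by simp⟩, hxO⟩
        obtain ⟨p, hpS, hpx⟩ :=
          Set.exists_of_ssubset (hsub.ssubset_of_ne (Ne.symm hv))
        obtain ⟨τ, hτ0, rfl⟩ := hpS.1
        have hτ : 0 < τ := hτ0.lt_of_ne fun h => hpx (by rw [← h]; simp)
        have hq := T.key hconv hΦ hxi hu' hv' hτ hpS.2 hp
        rw [max_eq_left hp.le]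
        rw [inner_sub_right] at hinn'
        linarith
    · rw [vis, if_neg hv, vis, if_neg hv', mul_zero, mul_zero, sub_zero, abs_zero]
      exact norm_nonneg _
  obtain ⟨hm1, hm2⟩ := abs_le.1 main
  rw [Dbar, if_pos hΦ, Dbar, if_pos hΦ, hnorm]
  have e1 : ρ x * max (⟪T.normal i, u⟫:ℝ) 0 * T.vis x u
      - ρ x * max (⟪T.normal i, u'⟫:ℝ) 0 * T.vis x u'
      = ρ x * (max (⟪T.normal i, u⟫:ℝ) 0 * T.vis x u
        - max (⟪T.normal i, u'⟫:ℝ) 0 * T.vis x u') := by ring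
  rw [e1, mul_pow]
  exact mul_le_mul_of_nonneg_left (sq_le_sq' hm1 hm2) (sq_nonneg _)

end TriangulatedObject

theorem stmt10 {N : ℕ} (T : TriangulatedObject N) (hconv : Convex ℝ T.carrier)
    (ρ : E3 → ℝ)
    (hρ : ∀ x ∈ T.bdry, 0 < ρ x ∧ ρ x ≤ 1)
    (hρmeas : AEMeasurable ρ ((μH[2] : Measure E3).restrict T.bdry))
    (u u' : E3) (hu : ‖u‖ = 1) (hu' : ‖u'‖ = 1) (hclose : ‖u - u'‖ ≤ Real.sqrt 2) :
    (∫⁻ x in T.bdry, ENNReal.ofReal ((T.Dbar ρ u x - T.Dbar ρ u' x) ^ 2) ∂(μH[2] : Measure E3))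
      ≤ ENNReal.ofReal ((⨆ x : T.bdry, ρ (x : E3)) ^ 2 * ‖u - u'‖ ^ 2)
          * (μH[2] : Measure E3) T.bdry := by
  have hmeas : MeasurableSet T.bdry := isClosed_frontier.measurableSet
  have hbdd : BddAbove (Set.range fun y : T.bdry => ρ (y : E3)) :=
    ⟨1, by rintro r ⟨y, rfl⟩; exact (hρ y y.2).2⟩
  have hpt : ∀ x ∈ T.bdry, ENNReal.ofReal ((T.Dbar ρ u x - T.Dbar ρ u' x) ^ 2)
      ≤ ENNReal.ofReal ((⨆ y : T.bdry, ρ (y : E3)) ^ 2 * ‖u - u'‖ ^ 2) := by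
    intro x hx
    apply ENNReal.ofReal_le_ofReal
    refine le_trans (T.pointwise_bound hconv hx (hρ x hx).1.le hu hu') ?_
    refine mul_le_mul_of_nonneg_right ?_ (sq_nonneg _)
    exact pow_le_pow_left₀ (hρ x hx).1.le (le_ciSup hbdd ⟨x, hx⟩) 2
  calc (∫⁻ x in T.bdry,
        ENNReal.ofReal ((T.Dbar ρ u x - T.Dbar ρ u' x) ^ 2) ∂(μH[2] : Measure E3))
      ≤ ∫⁻ _x in T.bdry,
        ENNReal.ofReal ((⨆ y : T.bdry, ρ (y : E3)) ^ 2 * ‖u - u'‖ ^ 2)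
          ∂(μH[2] : Measure E3) := by
        refine lintegral_mono_ae ?_
        rw [ae_restrict_iff' hmeas]
        exact ae_of_all _ hpt
    _ = ENNReal.ofReal ((⨆ y : T.bdry, ρ (y : E3)) ^ 2 * ‖u - u'‖ ^ 2)
          * (μH[2] : Measure E3) T.bdry := setLIntegral_const _ _
end

section
/- Let n ≥ 2 and let u, v ∈ ℝⁿ satisfy ⟨u,v⟩ ≠ 0. Then the ℓ²→ℓ² operator norm of the linear map x ↦ x − u·⟨v,x⟩/⟨u,v⟩ (i.e., the matrix I − u vᵀ/(uᵀv)) equals ‖u‖₂·‖v‖₂/|⟨u,v⟩|, and the operator norm of the linear map x ↦ u·⟨v,x⟩/⟨u,v⟩ (i.e., u vᵀ/(uᵀv)) also equals ‖u‖₂·‖v‖₂/|⟨u,v⟩|. -/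
open scoped RealInnerProductSpace

set_option maxHeartbeats 1000000
set_option synthInstance.maxHeartbeats 400000

section Aux

variable {E : Type*} [NormedAddCommGroup E] [InnerProductSpace ℝ E]

private lemma upbd (u v x : E) (huv : (⟪u, v⟫ : ℝ) ≠ 0) :
    ‖x - ((⟪u, v⟫ : ℝ)⁻¹ * ⟪v, x⟫) • u‖ ≤ (‖u‖ * ‖v‖ / |(⟪u, v⟫ : ℝ)|) * ‖x‖ := by
  set c : ℝ := ⟪u, v⟫ with hc
  set a : ℝ := ⟪u, x⟫ with ha
  set b : ℝ := ⟪v, x⟫ with hb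
  have hv : v ≠ 0 := by
    rintro rfl; simp [hc] at huv
  have hB : (0:ℝ) < ‖v‖ := norm_pos_iff.2 hv
  have hc2 : (0:ℝ) < c ^ 2 := by positivity
  have hK0 : (0:ℝ) ≤ ‖u‖ * ‖v‖ / |c| * ‖x‖ := by positivity
  rw [← Real.sqrt_sq (norm_nonneg _), ← Real.sqrt_sq hK0]
  apply Real.sqrt_le_sqrt
  have hLHS : ‖x - ((c:ℝ)⁻¹ * b) • u‖ ^ 2
      = ‖x‖ ^ 2 - 2 * (c⁻¹ * b) * a + (c⁻¹ * b) ^ 2 * ‖u‖ ^ 2 := by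
    rw [norm_sub_sq_real, real_inner_smul_right, real_inner_comm u x, ← ha,
      norm_smul, mul_pow, Real.norm_eq_abs, sq_abs]
    ring
  rw [hLHS]
  -- Cauchy–Schwarz applied to auxiliary vectors
  set w₁ : E := ‖v‖ ^ 2 • u - c • v with hw₁
  set w₂ : E := ‖v‖ ^ 2 • x - b • v with hw₂
  have e0 : (⟪w₁, w₂⟫ : ℝ) = ‖v‖ ^ 2 * (‖v‖ ^ 2 * a - b * c) := by
    simp only [hw₁, hw₂, inner_sub_left, inner_sub_right, real_inner_smul_left,
      real_inner_smul_right, real_inner_self_eq_norm_sq, real_inner_comm u x,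
      real_inner_comm u v, real_inner_comm v x, ← ha, ← hb, ← hc]
    ring
  have e1 : ‖w₁‖ ^ 2 = ‖v‖ ^ 2 * (‖v‖ ^ 2 * ‖u‖ ^ 2 - c ^ 2) := by
    rw [← real_inner_self_eq_norm_sq]
    simp only [hw₁, inner_sub_left, inner_sub_right, real_inner_smul_left,
      real_inner_smul_right, real_inner_self_eq_norm_sq, norm_smul,
      Real.norm_eq_abs, sq_abs, mul_pow, real_inner_comm u v, ← hc]
    ring
  have e2 : ‖w₂‖ ^ 2 = ‖v‖ ^ 2 * (‖v‖ ^ 2 * ‖x‖ ^ 2 - b ^ 2) := by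
    rw [← real_inner_self_eq_norm_sq]
    simp only [hw₂, inner_sub_left, inner_sub_right, real_inner_smul_left,
      real_inner_smul_right, real_inner_self_eq_norm_sq, norm_smul,
      Real.norm_eq_abs, sq_abs, mul_pow, real_inner_comm v x, ← hb]
    ring
  have hcs : (⟪w₁, w₂⟫ : ℝ) ^ 2 ≤ ‖w₁‖ ^ 2 * ‖w₂‖ ^ 2 := by
    calc (⟪w₁, w₂⟫ : ℝ) ^ 2 = |(⟪w₁, w₂⟫ : ℝ)| ^ 2 := (sq_abs _).symm
      _ ≤ (‖w₁‖ * ‖w₂‖) ^ 2 :=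
          pow_le_pow_left₀ (abs_nonneg _) (abs_real_inner_le_norm w₁ w₂) 2
      _ = _ := mul_pow _ _ _
  rw [e0, e1, e2] at hcs
  have h4 : (0:ℝ) < ‖v‖ ^ 2 * ‖v‖ ^ 2 := by positivity
  have hcs' : (‖v‖ ^ 2 * a - b * c) ^ 2
      ≤ (‖v‖ ^ 2 * ‖u‖ ^ 2 - c ^ 2) * (‖v‖ ^ 2 * ‖x‖ ^ 2 - b ^ 2) := by
    apply le_of_mul_le_mul_left _ h4
    calc ‖v‖ ^ 2 * ‖v‖ ^ 2 * (‖v‖ ^ 2 * a - b * c) ^ 2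
        = (‖v‖ ^ 2 * (‖v‖ ^ 2 * a - b * c)) ^ 2 := by ring
      _ ≤ ‖v‖ ^ 2 * (‖v‖ ^ 2 * ‖u‖ ^ 2 - c ^ 2) * (‖v‖ ^ 2 * (‖v‖ ^ 2 * ‖x‖ ^ 2 - b ^ 2)) := hcs
      _ = ‖v‖ ^ 2 * ‖v‖ ^ 2 * ((‖v‖ ^ 2 * ‖u‖ ^ 2 - c ^ 2) * (‖v‖ ^ 2 * ‖x‖ ^ 2 - b ^ 2)) := by
          ring
  have hpoly : c ^ 2 * ‖x‖ ^ 2 - 2 * a * b * c + ‖u‖ ^ 2 * b ^ 2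
      ≤ ‖u‖ ^ 2 * ‖v‖ ^ 2 * ‖x‖ ^ 2 := by
    nlinarith [hcs', sq_nonneg (‖v‖ ^ 2 * a), pow_pos hB 2, sq_nonneg a]
  rw [div_mul_eq_mul_div, div_pow, sq_abs, le_div_iff₀ hc2]
  have hexp : (‖x‖ ^ 2 - 2 * (c⁻¹ * b) * a + (c⁻¹ * b) ^ 2 * ‖u‖ ^ 2) * c ^ 2
      = c ^ 2 * ‖x‖ ^ 2 - 2 * a * b * c + ‖u‖ ^ 2 * b ^ 2 := by
    field_simp
  rw [hexp]
  nlinarith [hpoly]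

end Aux

theorem stmt12 {n : ℕ} (hn : 2 ≤ n) (u v : EuclideanSpace ℝ (Fin n))
    (huv : (inner ℝ u v : ℝ) ≠ 0) :
    ‖ContinuousLinearMap.id ℝ (EuclideanSpace ℝ (Fin n))
        - (inner ℝ u v : ℝ)⁻¹ • ((innerSL ℝ v).smulRight u)‖
      = ‖u‖ * ‖v‖ / |(inner ℝ u v : ℝ)| ∧
    ‖(inner ℝ u v : ℝ)⁻¹ • ((innerSL ℝ v).smulRight u)‖
      = ‖u‖ * ‖v‖ / |(inner ℝ u v : ℝ)| := by
  set c : ℝ := ⟪u, v⟫ with hc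
  set K : ℝ := ‖u‖ * ‖v‖ / |c| with hK
  set T := ContinuousLinearMap.id ℝ (EuclideanSpace ℝ (Fin n))
      - (c:ℝ)⁻¹ • ((innerSL ℝ v).smulRight u) with hT
  have hu : u ≠ 0 := by rintro rfl; simp [hc] at huv
  have hv : v ≠ 0 := by rintro rfl; simp [hc] at huv
  have hA : (0:ℝ) < ‖u‖ := norm_pos_iff.2 hu
  have hB : (0:ℝ) < ‖v‖ := norm_pos_iff.2 hv
  have hcabs : (0:ℝ) < |c| := abs_pos.2 huv
  have hK0 : 0 ≤ K := by positivity
  have hTapp : ∀ x, T x = x - ((c:ℝ)⁻¹ * ⟪v, x⟫) • u := by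
    intro x
    simp [hT, ContinuousLinearMap.sub_apply, ContinuousLinearMap.smul_apply,
      ContinuousLinearMap.smulRight_apply, innerSL_apply_apply, smul_smul]
  have hle : ‖T‖ ≤ K := by
    apply ContinuousLinearMap.opNorm_le_bound _ hK0
    intro x
    rw [hTapp x]
    exact upbd u v x huv
  have hCS : |c| ≤ ‖u‖ * ‖v‖ := abs_real_inner_le_norm u v
  have hge : K ≤ ‖T‖ := by
    rcases eq_or_lt_of_le hCS with heq | hlt
    · -- parallel case : K = 1, use a vector orthogonal to v
      have hK1 : K = 1 := by rw [hK, ← heq, div_self (ne_of_gt hcabs)]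
      have hdim : Module.finrank ℝ (EuclideanSpace ℝ (Fin n)) = n :=
        finrank_euclideanSpace_fin
      have hspan : Module.finrank ℝ (ℝ ∙ v) = 1 := finrank_span_singleton hv
      have hsum := Submodule.finrank_add_finrank_orthogonal (K := (ℝ ∙ v))
      have hbot : ((ℝ ∙ v)ᗮ : Submodule ℝ (EuclideanSpace ℝ (Fin n))) ≠ ⊥ := by
        intro h
        rw [h, finrank_bot] at hsum
        omega
      obtain ⟨x₀, hmem, hx0⟩ := Submodule.exists_mem_ne_zero_of_ne_bot hbot
      have hvx : (⟪v, x₀⟫ : ℝ) = 0 :=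
        (Submodule.mem_orthogonal_singleton_iff_inner_right).1 hmem
      have hTx : T x₀ = x₀ := by rw [hTapp, hvx]; simp
      have hop := T.le_opNorm x₀
      rw [hTx] at hop
      have hx0n : (0:ℝ) < ‖x₀‖ := norm_pos_iff.2 hx0
      rw [hK1]
      nlinarith
    · -- non-parallel case: explicit maximizer
      set x₀ : EuclideanSpace ℝ (Fin n) := ‖u‖ ^ 2 • v - c • u with hx₀
      have hax : (⟪u, x₀⟫ : ℝ) = 0 := by
        simp only [hx₀, inner_sub_right, real_inner_smul_right, ← hc,
          real_inner_self_eq_norm_sq]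
        ring
      have hbx : (⟪v, x₀⟫ : ℝ) = ‖u‖ ^ 2 * ‖v‖ ^ 2 - c ^ 2 := by
        simp only [hx₀, inner_sub_right, real_inner_smul_right,
          real_inner_self_eq_norm_sq, real_inner_comm u v, ← hc]
        ring
      have hd : (0:ℝ) < ‖u‖ ^ 2 * ‖v‖ ^ 2 - c ^ 2 := by
        have : c ^ 2 < (‖u‖ * ‖v‖) ^ 2 := by
          rw [← sq_abs c]
          exact pow_lt_pow_left₀ hlt (abs_nonneg _) (by norm_num)
        nlinarith
      have hXsq : ‖x₀‖ ^ 2 = ‖u‖ ^ 2 * (‖u‖ ^ 2 * ‖v‖ ^ 2 - c ^ 2) := by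
        rw [← real_inner_self_eq_norm_sq]
        simp only [hx₀, inner_sub_left, inner_sub_right, real_inner_smul_left,
          real_inner_smul_right, real_inner_self_eq_norm_sq, norm_smul,
          Real.norm_eq_abs, sq_abs, mul_pow, real_inner_comm u v, ← hc]
        ring
      have hx0 : x₀ ≠ 0 := by
        intro h
        rw [h, norm_zero] at hXsq
        nlinarith
      have hx0n : (0:ℝ) < ‖x₀‖ := norm_pos_iff.2 hx0
      have hTsq : ‖T x₀‖ ^ 2 = (K * ‖x₀‖) ^ 2 := by
        rw [hTapp x₀, norm_sub_sq_real, real_inner_smul_right, real_inner_comm u x₀, hax,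
          norm_smul, hbx, hK, Real.norm_eq_abs]
        simp only [mul_pow, div_pow, sq_abs]
        rw [hXsq]
        field_simp
        ring
      have hTeq : ‖T x₀‖ = K * ‖x₀‖ := by
        have h1 : (0:ℝ) ≤ ‖T x₀‖ := norm_nonneg _
        have h2 : (0:ℝ) ≤ K * ‖x₀‖ := by positivity
        rw [← Real.sqrt_sq h1, ← Real.sqrt_sq h2, hTsq]
      have hop := T.le_opNorm x₀
      rw [hTeq] at hop
      exact le_of_mul_le_mul_right hop hx0n
  constructor
  · exact le_antisymm hle hge
  · have hns := norm_smul (β := EuclideanSpace ℝ (Fin n) →L[ℝ] EuclideanSpace ℝ (Fin n))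
      c⁻¹ (((innerSL ℝ) v).smulRight u)
    rw [hns, ContinuousLinearMap.norm_smulRight_apply, innerSL_apply_norm,
      Real.norm_eq_abs, abs_inv]
    field_simp
    rw [hK, mul_div_assoc', mul_div_cancel_left₀ _ hcabs.ne', mul_comm]
end

section
/- Let Ā, Â ∈ ℝ^{m×n}, let γ > 0, and let 0 ≤ γ' ≤ γ/(γ+1). Suppose that for every x ∈ ℝⁿ with all entries nonnegative and ‖Āx‖₂ ≤ 1, one has ‖Āx − Âx‖₂ ≤ γ'. Then δ(cone(Ā), cone(Â)) ≤ γ. -/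
open Matrix

/-- Pass from a plain vector in `Fin m → ℝ` to Euclidean space (ℓ² norm). -/
noncomputable def toEuc {m : ℕ} (y : Fin m → ℝ) : EuclideanSpace ℝ (Fin m) :=
  (EuclideanSpace.equiv (Fin m) ℝ).symm y

/-- The cone generated by the columns of a matrix: {Ax : x ≥ 0}. -/
noncomputable def matCone {m n : ℕ} (A : Matrix (Fin m) (Fin n) ℝ) :
    Set (EuclideanSpace ℝ (Fin m)) :=
  {y | ∃ x : Fin n → ℝ, (∀ j, 0 ≤ x j) ∧ y = toEuc (A.mulVec x)}

lemma toEuc_smul {m : ℕ} (c : ℝ) (u : Fin m → ℝ) : toEuc (c • u) = c • toEuc u := rfl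

theorem stmt13 {m n : ℕ} (Abar Ahat : Matrix (Fin m) (Fin n) ℝ) (γ γ' : ℝ)
    (hγ : 0 < γ) (hγ'0 : 0 ≤ γ') (hγ' : γ' ≤ γ / (γ + 1))
    (happrox : ∀ x : Fin n → ℝ, (∀ j, 0 ≤ x j) → ‖toEuc (Abar.mulVec x)‖ ≤ 1 →
      ‖toEuc (Abar.mulVec x) - toEuc (Ahat.mulVec x)‖ ≤ γ') :
    coneDisc (matCone Abar) (matCone Ahat) ≤ γ := by
  have hγ1 : (0:ℝ) < γ + 1 := by linarith
  have hkey : γ' * (γ + 1) ≤ γ := by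
    have h := mul_le_mul_of_nonneg_right hγ' hγ1.le
    rwa [div_mul_cancel₀ _ (ne_of_gt hγ1)] at h
  have hγ'γ : γ' ≤ γ := by nlinarith
  have hγ'lt1 : γ' < 1 := by nlinarith
  apply max_le
  · apply Real.iSup_le _ hγ.le
    rintro ⟨y, ⟨x, hx, rfl⟩, hnorm⟩
    have h2 := happrox x hx (le_of_eq hnorm)
    have hmem : toEuc (Ahat.mulVec x) ∈ matCone Ahat := ⟨x, hx, rfl⟩
    calc Metric.infDist (toEuc (Abar.mulVec x)) (matCone Ahat)
        ≤ dist (toEuc (Abar.mulVec x)) (toEuc (Ahat.mulVec x)) :=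
          Metric.infDist_le_dist_of_mem hmem
      _ = ‖toEuc (Abar.mulVec x) - toEuc (Ahat.mulVec x)‖ := dist_eq_norm _ _
      _ ≤ γ' := h2
      _ ≤ γ := hγ'γ
  · apply Real.iSup_le _ hγ.le
    rintro ⟨y, ⟨x, hx, rfl⟩, hnorm⟩
    have hmem : toEuc (Abar.mulVec x) ∈ matCone Abar := ⟨x, hx, rfl⟩
    have hdle : Metric.infDist (toEuc (Ahat.mulVec x)) (matCone Abar)
        ≤ ‖toEuc (Abar.mulVec x) - toEuc (Ahat.mulVec x)‖ := by
      calc Metric.infDist (toEuc (Ahat.mulVec x)) (matCone Abar)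
          ≤ dist (toEuc (Ahat.mulVec x)) (toEuc (Abar.mulVec x)) :=
            Metric.infDist_le_dist_of_mem hmem
        _ = ‖toEuc (Abar.mulVec x) - toEuc (Ahat.mulVec x)‖ := by
            rw [dist_eq_norm, norm_sub_rev]
    set t := ‖toEuc (Abar.mulVec x)‖ with ht
    by_cases hcase : t ≤ 1
    · have h2 := happrox x hx hcase
      linarith
    · push_neg at hcase
      have ht0 : 0 < t := by linarith
      have hx' : ∀ j, 0 ≤ (t⁻¹ • x) j := fun j => by
        have := hx j
        simp only [Pi.smul_apply, smul_eq_mul]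
        positivity
      have hAbar : Abar.mulVec (t⁻¹ • x) = t⁻¹ • Abar.mulVec x := by
        rw [mulVec_smul]
      have hAhat : Ahat.mulVec (t⁻¹ • x) = t⁻¹ • Ahat.mulVec x := by
        rw [mulVec_smul]
      have hnorm1 : ‖toEuc (Abar.mulVec (t⁻¹ • x))‖ = 1 := by
        rw [hAbar, toEuc_smul, norm_smul, ← ht]
        rw [norm_inv, Real.norm_eq_abs, abs_of_pos ht0]
        field_simp
      have key := happrox (t⁻¹ • x) hx' (le_of_eq hnorm1)
      have hdiff : ‖toEuc (Abar.mulVec (t⁻¹ • x)) - toEuc (Ahat.mulVec (t⁻¹ • x))‖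
          = t⁻¹ * ‖toEuc (Abar.mulVec x) - toEuc (Ahat.mulVec x)‖ := by
        rw [hAbar, hAhat, toEuc_smul, toEuc_smul, ← smul_sub, norm_smul,
          norm_inv, Real.norm_eq_abs, abs_of_pos ht0]
      have hbound : ‖toEuc (Abar.mulVec x) - toEuc (Ahat.mulVec x)‖ ≤ γ' * t := by
        rw [hdiff] at key
        have := (inv_mul_le_iff₀ ht0).mp key
        linarith [this]
      have htle : t ≤ 1 + γ' * t := by
        have h3 : t - ‖toEuc (Ahat.mulVec x)‖
            ≤ ‖toEuc (Abar.mulVec x) - toEuc (Ahat.mulVec x)‖ := norm_sub_norm_le _ _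
        rw [hnorm] at h3
        linarith
      -- γ' * t ≤ γ : from t(1-γ') ≤ 1 and γ'(γ+1) ≤ γ
      have hfinal : γ' * t ≤ γ := by nlinarith [mul_pos ht0 (sub_pos.mpr hγ'lt1)]
      linarith
end

section
/- Let Ā, L, S ∈ ℝ^{m×n} and μ ∈ ℝ^{n×n} with all entries of μ nonnegative, let γ > 0, and let 0 ≤ γ̄ ≤ (γ/(1+γ))². Suppose the (m+n)×(m+n) block matrix [[I_m, L+S−Ā], [(L+S−Ā)ᵀ, γ̄·ĀᵀĀ − μ]] is symmetric positive semidefinite. Then δ(cone(Ā), cone(L+S)) ≤ γ. -/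
open Matrix

lemma toEuc_norm_sq {m : ℕ} (v : Fin m → ℝ) : ‖toEuc v‖ ^ 2 = v ⬝ᵥ v := by
  rw [toEuc]
  rw [EuclideanSpace.norm_eq]
  rw [Real.sq_sqrt (by positivity)]
  simp [dotProduct, sq]

lemma toEuc_sub {m : ℕ} (v w : Fin m → ℝ) : toEuc (v - w) = toEuc v - toEuc w := rfl

theorem stmt15 {m n : ℕ} (Abar L S : Matrix (Fin m) (Fin n) ℝ)
    (μ : Matrix (Fin n) (Fin n) ℝ) (hμ : ∀ i j, 0 ≤ μ i j)
    (γ γbar : ℝ) (hγ : 0 < γ) (hγbar0 : 0 ≤ γbar) (hγbar : γbar ≤ (γ / (1 + γ)) ^ 2)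
    (hpsd : (Matrix.fromBlocks (1 : Matrix (Fin m) (Fin m) ℝ) (L + S - Abar)
        (L + S - Abar)ᵀ (γbar • (Abarᵀ * Abar) - μ)).PosSemidef) :
    coneDisc (matCone Abar) (matCone (L + S)) ≤ γ := by
  set E := L + S - Abar with hE
  set t := γ / (1 + γ) with ht
  have h1γ : (0:ℝ) < 1 + γ := by linarith
  have ht0 : 0 ≤ t := by positivity
  have ht1 : t < 1 := by
    rw [ht, div_lt_one h1γ]; linarith
  -- key inequality
  have key : ∀ x : Fin n → ℝ, (∀ j, 0 ≤ x j) →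
      ‖toEuc (E *ᵥ x)‖ ≤ t * ‖toEuc (Abar *ᵥ x)‖ := by
    intro x hx
    have hq := hpsd.dotProduct_mulVec_nonneg (Sum.elim (-(E *ᵥ x)) x)
    rw [fromBlocks_mulVec] at hq
    simp only [Sum.elim_comp_inl, Sum.elim_comp_inr, star_trivial,
      sumElim_dotProduct_sumElim, one_mulVec, sub_mulVec, smul_mulVec,
      ← mulVec_mulVec, neg_add_cancel, dotProduct_zero, zero_add,
      dotProduct_add, dotProduct_sub, dotProduct_smul, smul_eq_mul] at hq
    have hμx : 0 ≤ x ⬝ᵥ μ *ᵥ x := by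
      simp only [dotProduct, mulVec]
      apply Finset.sum_nonneg
      intro i _
      apply mul_nonneg (hx i)
      apply Finset.sum_nonneg
      intro j _
      exact mul_nonneg (hμ i j) (hx j)
    have h2 : x ⬝ᵥ Eᵀ *ᵥ -(E *ᵥ x) = -((E *ᵥ x) ⬝ᵥ (E *ᵥ x)) := by
      rw [dotProduct_mulVec, vecMul_transpose, dotProduct_neg]
    have h3 : x ⬝ᵥ Abarᵀ *ᵥ (Abar *ᵥ x) = (Abar *ᵥ x) ⬝ᵥ (Abar *ᵥ x) := by
      rw [dotProduct_mulVec, vecMul_transpose]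
    rw [h2, h3] at hq
    have hq' : (E *ᵥ x) ⬝ᵥ (E *ᵥ x) ≤ γbar * ((Abar *ᵥ x) ⬝ᵥ (Abar *ᵥ x)) := by
      linarith
    have hb : 0 ≤ (Abar *ᵥ x) ⬝ᵥ (Abar *ᵥ x) := by
      have := toEuc_norm_sq (Abar *ᵥ x)
      nlinarith [norm_nonneg (toEuc (Abar *ᵥ x))]
    have hsq : ‖toEuc (E *ᵥ x)‖ ^ 2 ≤ (t * ‖toEuc (Abar *ᵥ x)‖) ^ 2 := by
      rw [toEuc_norm_sq, mul_pow, toEuc_norm_sq]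
      calc (E *ᵥ x) ⬝ᵥ (E *ᵥ x) ≤ γbar * ((Abar *ᵥ x) ⬝ᵥ (Abar *ᵥ x)) := hq'
        _ ≤ t ^ 2 * ((Abar *ᵥ x) ⬝ᵥ (Abar *ᵥ x)) := mul_le_mul_of_nonneg_right hγbar hb
    exact (pow_le_pow_iff_left₀ (norm_nonneg _) (by positivity) two_ne_zero).mp hsq
  -- now bound both suprema
  have hγ0 : (0:ℝ) ≤ γ := le_of_lt hγ
  rw [coneDisc]
  apply max_le
  · apply Real.iSup_le _ hγ0
    rintro ⟨y, ⟨x, hx, rfl⟩, hy1⟩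
    have hmem : toEuc ((L + S) *ᵥ x) ∈ matCone (L + S) := ⟨x, hx, rfl⟩
    calc Metric.infDist (toEuc (Abar *ᵥ x)) (matCone (L + S))
        ≤ dist (toEuc (Abar *ᵥ x)) (toEuc ((L + S) *ᵥ x)) :=
          Metric.infDist_le_dist_of_mem hmem
      _ = ‖toEuc (E *ᵥ x)‖ := by
          rw [dist_eq_norm, ← toEuc_sub, ← norm_neg]
          have hv : -toEuc (Abar *ᵥ x - (L + S) *ᵥ x) = toEuc (E *ᵥ x) := by
            suffices h : -(Abar *ᵥ x - (L + S) *ᵥ x) = E *ᵥ x by rw [← h]; rfl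
            rw [hE, sub_mulVec]
            abel
          rw [hv]
      _ ≤ t * ‖toEuc (Abar *ᵥ x)‖ := key x hx
      _ = t := by rw [hy1, mul_one]
      _ ≤ γ := by
          rw [ht, div_le_iff₀ h1γ]; nlinarith
  · apply Real.iSup_le _ hγ0
    rintro ⟨y, ⟨x, hx, rfl⟩, hy1⟩
    have hmem : toEuc (Abar *ᵥ x) ∈ matCone Abar := ⟨x, hx, rfl⟩
    have hdist : dist (toEuc ((L + S) *ᵥ x)) (toEuc (Abar *ᵥ x)) = ‖toEuc (E *ᵥ x)‖ := by
      rw [dist_eq_norm, ← toEuc_sub]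
      congr 2
      rw [hE, sub_mulVec]
    have hkey := key x hx
    have htri : ‖toEuc (Abar *ᵥ x)‖ ≤ 1 + ‖toEuc (E *ᵥ x)‖ := by
      have : toEuc (Abar *ᵥ x) = toEuc ((L + S) *ᵥ x) - toEuc (E *ᵥ x) := by
        rw [← toEuc_sub]
        suffices h : Abar *ᵥ x = (L + S) *ᵥ x - E *ᵥ x by rw [h]
        rw [hE, sub_mulVec]
        abel
      rw [this]
      calc ‖toEuc ((L + S) *ᵥ x) - toEuc (E *ᵥ x)‖
          ≤ ‖toEuc ((L + S) *ᵥ x)‖ + ‖toEuc (E *ᵥ x)‖ := norm_sub_le _ _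
        _ = 1 + ‖toEuc (E *ᵥ x)‖ := by rw [hy1]
    have hEle : ‖toEuc (E *ᵥ x)‖ ≤ γ := by
      have h := hkey.trans (by nlinarith : t * ‖toEuc (Abar *ᵥ x)‖ ≤ t * (1 + ‖toEuc (E *ᵥ x)‖))
      have htγ : t * (1 + γ) = γ := by rw [ht]; field_simp
      nlinarith [norm_nonneg (toEuc (E *ᵥ x))]
    calc Metric.infDist (toEuc ((L + S) *ᵥ x)) (matCone Abar)
        ≤ dist (toEuc ((L + S) *ᵥ x)) (toEuc (Abar *ᵥ x)) :=
          Metric.infDist_le_dist_of_mem hmem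
      _ = ‖toEuc (E *ᵥ x)‖ := hdist
      _ ≤ γ := hEle
end

section
/- Let Ā, Â ∈ ℝ^{m×n}, β ≥ 0, and μ ∈ ℝ^{n×n} with all entries of μ nonnegative, and suppose the block matrix [[I_m, Â−Ā], [(Â−Ā)ᵀ, β·ĀᵀĀ − μ]] is symmetric positive semidefinite. Then for every symmetric X ∈ ℝ^{n×n} that is entrywise nonnegative, positive semidefinite, and satisfies ⟨ĀᵀĀ, X⟩ ≤ 1, one has ⟨(Â−Ā)ᵀ(Â−Ā), X⟩ ≤ β. -/
open Matrix

/-- The trace inner product ⟨M,N⟩ = trace(Mᵀ N). -/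
def matInner {k : ℕ} (M Nn : Matrix (Fin k) (Fin k) ℝ) : ℝ :=
  Matrix.trace (Mᵀ * Nn)

lemma psd_trace_nonneg {k : ℕ} {P : Matrix (Fin k) (Fin k) ℝ} (hP : P.PosSemidef) :
    0 ≤ P.trace := by
  rw [Matrix.trace]
  apply Finset.sum_nonneg
  intro i _
  have := hP.dotProduct_mulVec_nonneg (Pi.single i 1)
  simp only [Matrix.trace, Matrix.diag]
  simpa [Matrix.mulVec_single, dotProduct, Pi.single_apply] using this

lemma psd_trace_mul_nonneg {k : ℕ} {P X : Matrix (Fin k) (Fin k) ℝ} (hP : P.PosSemidef)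
    (hX : X.PosSemidef) : 0 ≤ (P * X).trace := by
  obtain ⟨B, hB⟩ : ∃ B : Matrix (Fin k) (Fin k) ℝ, X = Bᴴ * B := by
    open scoped MatrixOrder Matrix.Norms.L2Operator in
    exact CStarAlgebra.nonneg_iff_eq_star_mul_self.mp hX.nonneg
  rw [hB, ← Matrix.mul_assoc, Matrix.trace_mul_cycle]
  exact psd_trace_nonneg (hP.mul_mul_conjTranspose_same B)

theorem stmt16 {m n : ℕ} (Abar Ahat : Matrix (Fin m) (Fin n) ℝ) (β : ℝ) (hβ : 0 ≤ β)
    (μ : Matrix (Fin n) (Fin n) ℝ) (hμ : ∀ i j, 0 ≤ μ i j)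
    (hpsd : (Matrix.fromBlocks (1 : Matrix (Fin m) (Fin m) ℝ) (Ahat - Abar)
        (Ahat - Abar)ᵀ (β • (Abarᵀ * Abar) - μ)).PosSemidef) :
    ∀ X : Matrix (Fin n) (Fin n) ℝ, X.IsSymm → (∀ i j, 0 ≤ X i j) → X.PosSemidef →
      matInner (Abarᵀ * Abar) X ≤ 1 →
      matInner ((Ahat - Abar)ᵀ * (Ahat - Abar)) X ≤ β := by
  intro X hXsymm hXnn hXpsd hX1
  set D := Ahat - Abar with hD
  set S := β • (Abarᵀ * Abar) - μ with hS
  -- Schur complement: S - Dᵀ D is PSD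
  have hSherm : S.IsHermitian := by
    have h := hpsd.submatrix (Sum.inr : Fin n → Fin m ⊕ Fin n)
    have : (Matrix.fromBlocks (1 : Matrix (Fin m) (Fin m) ℝ) D Dᵀ S).submatrix
        (Sum.inr : Fin n → Fin m ⊕ Fin n) Sum.inr = S := by
      ext i j; simp [Matrix.fromBlocks, Matrix.submatrix]
    rw [this] at h
    exact h.1
  have hSchur : (S - Dᵀ * D).PosSemidef := by
    refine posSemidef_iff_dotProduct_mulVec.mpr ⟨?_, ?_⟩
    · exact hSherm.sub (Matrix.isHermitian_conjTranspose_mul_self D)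
    · intro x
      have h := hpsd.dotProduct_mulVec_nonneg (Sum.elim (-(D *ᵥ x)) x)
      rw [Matrix.fromBlocks_mulVec] at h
      simp only [star_trivial, sumElim_dotProduct_sumElim, Matrix.one_mulVec,
        Matrix.mulVec_neg, dotProduct_neg, neg_dotProduct, neg_neg,
        dotProduct_add] at h
      have key : x ⬝ᵥ ((S - Dᵀ * D) *ᵥ x) =
          (D *ᵥ x) ⬝ᵥ (D *ᵥ x) + (-(D *ᵥ x)) ⬝ᵥ (D *ᵥ x) +
            (x ⬝ᵥ (Dᵀ *ᵥ (-(D *ᵥ x))) + x ⬝ᵥ (S *ᵥ x)) := by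
        simp only [Matrix.sub_mulVec, dotProduct_sub, Matrix.mulVec_neg,
          dotProduct_neg, neg_dotProduct, neg_neg]
        have h1 : x ⬝ᵥ ((Dᵀ * D) *ᵥ x) = x ⬝ᵥ (Dᵀ *ᵥ (D *ᵥ x)) := by
          rw [Matrix.mulVec_mulVec]
        have h2 : x ⬝ᵥ (Dᵀ *ᵥ (D *ᵥ x)) = (D *ᵥ x) ⬝ᵥ (D *ᵥ x) := by
          rw [Matrix.dotProduct_mulVec, Matrix.vecMul_transpose]
        rw [h1, h2]; ring
      rw [star_trivial, key]
      convert h using 1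
      simp [dotProduct_neg, neg_dotProduct]
  -- trace inequalities
  have hμX : 0 ≤ (μᵀ * X).trace := by
    simp only [Matrix.trace, Matrix.diag, Matrix.mul_apply, Matrix.transpose_apply]
    exact Finset.sum_nonneg fun i _ => Finset.sum_nonneg fun j _ =>
      mul_nonneg (hμ j i) (hXnn j i)
  have hkey : 0 ≤ ((S - Dᵀ * D) * X).trace := psd_trace_mul_nonneg hSchur hXpsd
  have hexp : ((S - Dᵀ * D) * X).trace =
      β * (Abarᵀ * Abar * X).trace - (μ * X).trace - ((Dᵀ * D) * X).trace := by
    simp [hS, Matrix.sub_mul, Matrix.smul_mul, Matrix.trace_sub, Matrix.trace_smul, smul_eq_mul]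
  have hμX' : 0 ≤ (μ * X).trace := by
    have h3 : (μ * X).trace = (μᵀ * X).trace := by
      have h4 : X * μ = (μᵀ * Xᵀ)ᵀ := by simp [Matrix.transpose_mul]
      rw [Matrix.trace_mul_comm μ X, h4, Matrix.trace_transpose, hXsymm]
    rw [h3]; exact hμX
  unfold matInner at hX1 ⊢
  have hherm : (Abarᵀ * Abar)ᵀ = Abarᵀ * Abar := by
    simp [Matrix.transpose_mul]
  have hherm2 : ((Ahat - Abar)ᵀ * (Ahat - Abar))ᵀ = (Ahat - Abar)ᵀ * (Ahat - Abar) := by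
    simp [Matrix.transpose_mul]
  rw [hherm2]
  rw [hherm] at hX1
  have hAX : 0 ≤ (Abarᵀ * Abar * X).trace :=
    psd_trace_mul_nonneg (Matrix.posSemidef_conjTranspose_mul_self Abar) hXpsd
  calc ((Ahat - Abar)ᵀ * (Ahat - Abar) * X).trace = ((Dᵀ * D) * X).trace := by rw [hD]
    _ ≤ β * (Abarᵀ * Abar * X).trace - (μ * X).trace := by linarith [hexp ▸ hkey]
    _ ≤ β * 1 - 0 := by
        apply sub_le_sub
        · exact mul_le_mul_of_nonneg_left hX1 hβ
        · exact hμX'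
    _ = β := by ring
end
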